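/- arXiv:1807.08722 — 3 statements merged into one kernel-verified Lean document; each statement's English description precedes it below -/
import Mathlib

section
/- Let ξ be a realizable boundary condition on Λ_{n,l}, free on the south, east and west boundaries, and suppose a < b < c < d are such that [a,c] and [b,d] are disconnecting intervals. If both are of wired-type, then [a,b], [b,c], [c,d] and [a,d] are all disconnecting intervals of wired-type. If both are of free-type, then [a,b−1], [b,c], [c+1,d] and [a,d] are all disconnecting intervals of free-type. -/
/-- Nearest-neighbour adjacency in `ℤ²`. -/
def nbr (u v : ℤ × ℤ) : Prop := (u.1 - v.1).natAbs + (u.2 - v.2).natAbs = 1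

/-- Membership in the box `Λ_{n,l} = [0,n] × [0,l]`. -/
def inBox (n l : ℤ) (v : ℤ × ℤ) : Prop := 0 ≤ v.1 ∧ v.1 ≤ n ∧ 0 ≤ v.2 ∧ v.2 ≤ l

/-- The boundary `∂Λ_{n,l}` of the box. -/
def onBoundary (n l : ℤ) (v : ℤ × ℤ) : Prop :=
  inBox n l v ∧ (v.1 = 0 ∨ v.1 = n ∨ v.2 = 0 ∨ v.2 = l)

/-- Connectivity of `u` and `v` by an open path of the configuration `ω` using
only edges of `ℤ²` that are not edges of the box `Λ_{n,l}`. -/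
def extConnected (n l : ℤ) (ω : Sym2 (ℤ × ℤ) → Prop) (u v : ℤ × ℤ) : Prop :=
  Relation.ReflTransGen
    (fun x y => nbr x y ∧ ω s(x, y) ∧ ¬(inBox n l x ∧ inBox n l y)) u v

/-- `ξ` is realizable: it is induced by the connectivities of some edge
configuration on `E(ℤ²) \ E(Λ_{n,l})`. -/
def Realizable (n l : ℤ) (ξ : ℤ × ℤ → ℤ × ℤ → Prop) : Prop :=
  ∃ ω : Sym2 (ℤ × ℤ) → Prop, ∀ u v : ℤ × ℤ,
    onBoundary n l u → onBoundary n l v → (ξ u v ↔ extConnected n l ω u v)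

/-- `ξ` is an equivalence relation which relates distinct vertices only if both
lie on the boundary of the box (i.e. it is a partition of `∂Λ_{n,l}`). -/
def BoundaryPartition (n l : ℤ) (ξ : ℤ × ℤ → ℤ × ℤ → Prop) : Prop :=
  Equivalence ξ ∧ ∀ u v, ξ u v → u ≠ v → onBoundary n l u ∧ onBoundary n l v

/-- `ξ` is free (all singletons) on the south, east and west boundaries. -/
def FreeOnSEW (n l : ℤ) (ξ : ℤ × ℤ → ℤ × ℤ → Prop) : Prop :=
  ∀ u v : ℤ × ℤ, ξ u v → u ≠ v → ¬(u.1 = 0 ∨ u.1 = n ∨ u.2 = 0)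

/-- `[a,b]` is a disconnecting interval of free-type: no block of `ξ` contains
both a vertex of `[a,b] × {l}` and a vertex of `([0,n] \ [a,b]) × {l}`. -/
def FreeType (n l : ℤ) (ξ : ℤ × ℤ → ℤ × ℤ → Prop) (a b : ℤ) : Prop :=
  ∀ x y : ℤ, a ≤ x → x ≤ b → 0 ≤ y → y ≤ n → (y < a ∨ b < y) → ¬ ξ (x, l) (y, l)

/-- `[a,b]` is a disconnecting interval of wired-type: some block of `ξ`
contains both `(a,l)` and `(b,l)`. -/
def WiredType (l : ℤ) (ξ : ℤ × ℤ → ℤ × ℤ → Prop) (a b : ℤ) : Prop := ξ (a, l) (b, l)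

namespace S4

abbrev V : Type := ℤ × ℤ

def stepsOf (u : V) (L : List V) : List (V × V) := (u :: L).zip L

@[simp] lemma stepsOf_nil (u : V) : stepsOf u [] = [] := rfl
@[simp] lemma stepsOf_cons (u b : V) (L : List V) :
    stepsOf u (b :: L) = (u, b) :: stepsOf b L := rfl

def lastOf (u : V) : List V → V
  | [] => u
  | b :: L => lastOf b L

@[simp] lemma lastOf_nil (u : V) : lastOf u [] = u := rfl
@[simp] lemma lastOf_cons (u b : V) (L : List V) : lastOf u (b :: L) = lastOf b L := rfl

lemma lastOf_append (u : V) (L M : List V) :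
    lastOf u (L ++ M) = lastOf (lastOf u L) M := by
  induction L generalizing u with
  | nil => simp
  | cons b L ih => simp [ih]

lemma stepsOf_append (u : V) (L M : List V) :
    stepsOf u (L ++ M) = stepsOf u L ++ stepsOf (lastOf u L) M := by
  induction L generalizing u with
  | nil => simp
  | cons b L ih => simp [ih]

lemma chain_append {S : V → V → Prop} {u : V} {L M : List V}
    (h1 : List.Chain S u L) (h2 : List.Chain S (lastOf u L) M) :
    List.Chain S u (L ++ M) := by
  induction L generalizing u with
  | nil => simpa using h2
  | cons b L ih =>
    rw [List.Chain, List.chain_cons] at h1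
    exact List.chain_cons.mpr ⟨h1.1, ih h1.2 (by simpa using h2)⟩

lemma chain_steps {S : V → V → Prop} {u : V} {L : List V} (h : List.Chain S u L) :
    ∀ s ∈ stepsOf u L, S s.1 s.2 := by
  induction L generalizing u with
  | nil => simp
  | cons b L ih =>
    rw [List.Chain, List.chain_cons] at h
    intro s hs
    rcases (by simpa using hs : s = (u, b) ∨ s ∈ stepsOf b L) with rfl | hs
    · exact h.1
    · exact ih h.2 s hs

lemma steps_mem {u : V} {L : List V} {s : V × V} (hs : s ∈ stepsOf u L) :
    s.1 ∈ u :: L ∧ s.2 ∈ u :: L := by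
  induction L generalizing u with
  | nil => simp at hs
  | cons b L ih =>
    rcases (by simpa using hs : s = (u, b) ∨ s ∈ stepsOf b L) with rfl | hs
    · simp
    · have h2 := ih hs
      refine ⟨?_, ?_⟩
      · rcases List.mem_cons.mp h2.1 with h | h
        · exact List.mem_cons.mpr (Or.inr (List.mem_cons.mpr (Or.inl h)))
        · exact List.mem_cons.mpr (Or.inr (List.mem_cons.mpr (Or.inr h)))
      · rcases List.mem_cons.mp h2.2 with h | h
        · exact List.mem_cons.mpr (Or.inr (List.mem_cons.mpr (Or.inl h)))
        · exact List.mem_cons.mpr (Or.inr (List.mem_cons.mpr (Or.inr h)))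

lemma exists_walk {S : V → V → Prop} {u v : V} (h : Relation.ReflTransGen S u v) :
    ∃ L : List V, List.Chain S u L ∧ lastOf u L = v := by
  induction h using Relation.ReflTransGen.head_induction_on with
  | refl => exact ⟨[], List.Chain.nil, rfl⟩
  | head h' _ ih =>
    obtain ⟨L, hC, hlast⟩ := ih
    exact ⟨_ :: L, List.chain_cons.mpr ⟨h', hC⟩, by simpa using hlast⟩

lemma walk_mem_rtg {S : V → V → Prop} {u : V} {L : List V} (h : List.Chain S u L) :
    ∀ v ∈ u :: L, Relation.ReflTransGen S u v := by
  induction L generalizing u with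
  | nil => intro v hv; simp at hv; subst hv; exact Relation.ReflTransGen.refl
  | cons b L ih =>
    rw [List.Chain, List.chain_cons] at h
    intro v hv
    rcases List.mem_cons.mp hv with rfl | hv
    · exact Relation.ReflTransGen.refl
    · exact Relation.ReflTransGen.head h.1 (ih h.2 v hv)


set_option maxHeartbeats 1000000

/-! ### Counting machinery -/

lemma countP_split {α : Type} (S : List α) (A B C : α → Bool)
    (h : ∀ s ∈ S, (A s = true ↔ (B s = true ∨ C s = true)) ∧ ¬(B s = true ∧ C s = true)) :
    S.countP A = S.countP B + S.countP C := by
  induction S with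
  | nil => simp
  | cons a S ih =>
    have h1 := h a (by simp)
    have h2 : ∀ s ∈ S, (A s = true ↔ (B s = true ∨ C s = true)) ∧ ¬(B s = true ∧ C s = true) :=
      fun s hs => h s (List.mem_cons.mpr (Or.inr hs))
    simp only [List.countP_cons]
    rw [ih h2]
    rcases h1 with ⟨h3, h4⟩
    cases hA : A a <;> cases hB : B a <;> cases hC : C a <;> simp_all <;> omega

def indB (b : Bool) : ZMod 2 := if b then 1 else 0

lemma zmod2_helper (a b c : ZMod 2) (h : a + b + c = 0) : a + b = c := by
  revert a b c; decide

lemma flip_parity (f : V → Bool) (u : V) (L : List V) :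
    (((stepsOf u L).countP (fun s => f s.1 != f s.2) : ℕ) : ZMod 2)
      = indB (f u) + indB (f (lastOf u L)) := by
  induction L generalizing u with
  | nil =>
    simp only [stepsOf_nil, List.countP_nil, lastOf_nil, Nat.cast_zero]
    cases f u <;> simp [indB] <;> decide
  | cons b L ih =>
    simp only [stepsOf_cons, List.countP_cons, lastOf_cons]
    push_cast
    rw [ih b]
    have h1 : (if (f u != f b) = true then (1 : ZMod 2) else 0) = indB (f u) + indB (f b) := by
      cases hu : f u <;> cases hb : f b <;> simp [indB] <;> decide
    rw [add_comm, h1]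
    cases f u <;> cases f b <;> cases f (lastOf b L) <;> simp [indB] <;> decide

lemma incidence_parity (w : V) (u : V) (L : List V) :
    (((stepsOf u L).countP (fun s => decide (s.1 = w)) : ℕ) : ZMod 2)
      + (((stepsOf u L).countP (fun s => decide (s.2 = w)) : ℕ) : ZMod 2)
      = indB (decide (u = w)) + indB (decide (lastOf u L = w)) := by
  induction L generalizing u with
  | nil =>
    simp only [stepsOf_nil, List.countP_nil, lastOf_nil, Nat.cast_zero, zero_add]
    cases h : decide (u = w) <;> simp_all [indB] <;> decide
  | cons b L ih =>
    simp only [stepsOf_cons, List.countP_cons, lastOf_cons]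
    push_cast
    have e1 : (if (decide ((u, b).1 = w)) = true then (1 : ZMod 2) else 0) = indB (decide (u = w)) := by
      cases h : decide (u = w) <;> simp_all [indB]
    have e2 : (if (decide ((u, b).2 = w)) = true then (1 : ZMod 2) else 0) = indB (decide (b = w)) := by
      cases h : decide (b = w) <;> simp_all [indB]
    rw [show ∀ x y z t : ZMod 2, (x + y) + (z + t) = (x + z) + (y + t) from by intros; ring]
    rw [ih b, e1, e2]
    cases h1 : decide (u = w) <;> cases h2 : decide (b = w) <;>
      cases h3 : decide (lastOf b L = w) <;> simp_all [indB] <;> decide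

/-! ### Crossing predicates -/

def crossB (p : V) (s : V × V) : Bool :=
  decide (s.1.2 = s.2.2 ∧ p.2 < s.1.2 ∧
    ((s.1.1 = p.1 - 1 ∧ s.2.1 = p.1) ∨ (s.1.1 = p.1 ∧ s.2.1 = p.1 - 1)))

def travH (e h : ℤ) (s : V × V) : Bool :=
  decide ((s.1 = ((e-1 : ℤ), h) ∧ s.2 = (e, h)) ∨ (s.1 = (e, h) ∧ s.2 = ((e-1:ℤ), h)))

def travV (x y : ℤ) (s : V × V) : Bool :=
  decide ((s.1 = (x, y) ∧ s.2 = (x, y+1)) ∨ (s.1 = (x, y+1) ∧ s.2 = (x, y)))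

def sig (S : List (V × V)) (p : V) : ZMod 2 := ((S.countP (crossB p) : ℕ) : ZMod 2)

lemma ruleV (S : List (V × V)) (x y : ℤ) :
    S.countP (crossB (x, y)) = S.countP (crossB (x, y + 1)) + S.countP (travH x (y + 1)) := by
  apply countP_split
  rintro ⟨⟨x1, y1⟩, ⟨x2, y2⟩⟩ _
  simp only [crossB, travH, decide_eq_true_iff, Prod.mk.injEq]
  refine ⟨by omega, by omega⟩

lemma sig_ruleV (S : List (V × V)) (x y : ℤ) :
    sig S (x, y) = sig S (x, y + 1) + (((S.countP (travH x (y + 1)) : ℕ)) : ZMod 2) := by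
  have := ruleV S x y
  rw [sig, sig, this]
  push_cast
  ring

lemma ruleH (u : V) (L : List V) (x y : ℤ)
    (hnbr : ∀ s ∈ stepsOf u L, nbr s.1 s.2) (hclosed : lastOf u L = u) :
    sig (stepsOf u L) (x, y) + sig (stepsOf u L) (x + 1, y)
      = (((stepsOf u L).countP (travV x y) : ℕ) : ZMod 2) := by
  set S := stepsOf u L with hS
  have key : S.countP (fun s => (decide (s.1.1 = x ∧ y < s.1.2)) != (decide (s.2.1 = x ∧ y < s.2.2)))
      = S.countP (crossB (x, y)) + (S.countP (crossB (x+1, y)) + S.countP (travV x y)) := by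
    rw [countP_split S _ (crossB (x,y)) (fun s => crossB (x+1,y) s || travV x y s) ?_]
    · congr 1
      apply countP_split
      rintro ⟨⟨x1, y1⟩, ⟨x2, y2⟩⟩ _
      simp only [crossB, travV, Bool.or_eq_true, decide_eq_true_iff, Prod.mk.injEq]
      exact ⟨by tauto, by omega⟩
    · rintro ⟨⟨x1, y1⟩, ⟨x2, y2⟩⟩ hs
      have hn := hnbr _ hs
      simp only [nbr] at hn
      simp only [crossB, travV, Bool.or_eq_true, bne_iff_ne, ne_eq, decide_eq_decide,
        decide_eq_true_iff, Prod.mk.injEq]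
      refine ⟨by omega, by omega⟩
  have hflip : ((S.countP (fun s => (decide (s.1.1 = x ∧ y < s.1.2)) != (decide (s.2.1 = x ∧ y < s.2.2))) : ℕ) : ZMod 2)
      = indB (decide (u.1 = x ∧ y < u.2)) + indB (decide (u.1 = x ∧ y < u.2)) := by
    have h := flip_parity (fun v : V => decide (v.1 = x ∧ y < v.2)) u L
    rw [hclosed, ← hS] at h
    exact h
  rw [key] at hflip
  push_cast at hflip
  have h0 : indB (decide (u.1 = x ∧ y < u.2)) + indB (decide (u.1 = x ∧ y < u.2)) = 0 := by
    cases h : decide (u.1 = x ∧ y < u.2) <;> simp [indB] <;> decide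
  rw [h0] at hflip
  refine zmod2_helper _ _ _ ?_
  rw [sig, sig]
  push_cast
  linear_combination hflip


/-! ### The explicit return path along the top row -/

def rowWalk (l : ℤ) : ℤ → ℕ → List V
  | _, 0 => []
  | x, Nat.succ k => ((x - 1 : ℤ), l) :: rowWalk l (x - 1) k

lemma rowWalk_chain (l x : ℤ) (k : ℕ) : List.Chain nbr (x, l) (rowWalk l x k) := by
  induction k generalizing x with
  | zero => exact List.Chain.nil
  | succ k ih =>
    refine List.chain_cons.mpr ⟨?_, ih (x - 1)⟩
    simp only [nbr]
    omega

lemma rowWalk_last (l x : ℤ) (k : ℕ) : lastOf (x, l) (rowWalk l x k) = (x - k, l) := by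
  induction k generalizing x with
  | zero => simp [rowWalk]
  | succ k ih =>
    rw [rowWalk, lastOf_cons, ih (x - 1)]
    congr 1
    push_cast
    ring

lemma rowWalk_step (l x : ℤ) (k : ℕ) :
    ∀ s ∈ stepsOf (x, l) (rowWalk l x k),
      ∃ x' : ℤ, x - k < x' ∧ x' ≤ x ∧ s = ((x', l), (x' - 1, l)) := by
  induction k generalizing x with
  | zero => simp [rowWalk]
  | succ k ih =>
    intro s hs
    rw [rowWalk, stepsOf_cons] at hs
    rcases List.mem_cons.mp hs with rfl | hs
    · exact ⟨x, by push_cast; omega, le_refl x, rfl⟩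
    · obtain ⟨x', h1, h2, h3⟩ := ih (x - 1) s hs
      exact ⟨x', by push_cast at h1 ⊢; omega, by omega, h3⟩

lemma rowWalk_countH (l x e : ℤ) (k : ℕ) :
    (stepsOf (x, l) (rowWalk l x k)).countP (travH e l)
      = if x - k ≤ e - 1 ∧ e ≤ x then 1 else 0 := by
  induction k generalizing x with
  | zero =>
    simp only [rowWalk, stepsOf_nil, List.countP_nil]
    split_ifs with h
    · exfalso; omega
    · rfl
  | succ k ih =>
    rw [rowWalk, stepsOf_cons, List.countP_cons, ih (x - 1)]
    have he : (travH e l ((x, l), (x - 1, l)) = true) ↔ e = x := by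
      simp only [travH, decide_eq_true_iff, Prod.mk.injEq, and_true, true_and]
      omega
    simp only [he]
    split_ifs <;> omega


lemma inBox_iff {n l x y : ℤ} : inBox n l (x, y) ↔ 0 ≤ x ∧ x ≤ n ∧ 0 ≤ y ∧ y ≤ l := Iff.rfl

lemma zmod2_eq_of_add_eq_zero (a b : ZMod 2) (h : a + b = 0) : b = a := by
  revert a b; decide

lemma zmod2_add_left (a b c : ZMod 2) (h : a + b = c) : b = a + c := by
  revert a b c; decide

lemma wired_main (n l : ℤ) (hl : 0 < l) (ω : Sym2 (ℤ × ℤ) → Prop)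
    (a b c d : ℤ) (ha : 0 ≤ a) (hab : a < b) (hbc : b < c) (hcd : c < d) (hd : d ≤ n)
    (h1 : extConnected n l ω (a, l) (c, l)) (h2 : extConnected n l ω (b, l) (d, l)) :
    extConnected n l ω (a, l) (b, l) := by
  classical
  set R : V → V → Prop :=
    (fun x y => nbr x y ∧ ω s(x, y) ∧ ¬(inBox n l x ∧ inBox n l y)) with hRdef
  have hsymR : Symmetric R := by
    rintro u v ⟨hn, hw, hb⟩
    refine ⟨by simp only [nbr] at *; omega, by rwa [Sym2.eq_swap], by rwa [and_comm]⟩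
  have h1' : Relation.ReflTransGen R (a, l) (c, l) := h1
  have h2' : Relation.ReflTransGen R (b, l) (d, l) := h2
  obtain ⟨L1, hC1, hE1⟩ := exists_walk h1'
  obtain ⟨L2, hC2, hE2⟩ := exists_walk h2'
  by_cases hshare : ∃ v, v ∈ ((a, l) :: L1) ∧ v ∈ ((b, l) :: L2)
  · obtain ⟨v, hv1, hv2⟩ := hshare
    exact (walk_mem_rtg hC1 v hv1).trans
      ((@Std.Symm.symm _ _ (@Relation.ReflTransGen.stdSymm _ R ⟨fun _ _ h => hsymR h⟩) _ _) (walk_mem_rtg hC2 v hv2))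
  push_neg at hshare
  exfalso
  -- setup
  set k : ℕ := (c - a).toNat with hk
  have hkc : (k : ℤ) = c - a := Int.toNat_of_nonneg (by omega)
  set u0 : V := ((a : ℤ), (l : ℤ)) with hu0
  set W : List V := L1 ++ rowWalk l c k with hW
  set Sγ : List (V × V) := stepsOf u0 W with hSγ
  have hsplit : Sγ = stepsOf u0 L1 ++ stepsOf ((c : ℤ), (l : ℤ)) (rowWalk l c k) := by
    rw [hSγ, hW, stepsOf_append, hE1]
  have hlastW : lastOf u0 W = u0 := by
    rw [hW, lastOf_append, hE1, rowWalk_last, hu0]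
    have : c - (k : ℤ) = a := by omega
    rw [this]
  have hP1R : ∀ s ∈ stepsOf u0 L1, R s.1 s.2 := chain_steps hC1
  have hρstep : ∀ s ∈ stepsOf ((c : ℤ), (l : ℤ)) (rowWalk l c k),
      ∃ x' : ℤ, a < x' ∧ x' ≤ c ∧ s = ((x', l), (x' - 1, l)) := by
    intro s hs
    obtain ⟨x', hx1, hx2, hx3⟩ := rowWalk_step l c k s hs
    exact ⟨x', by omega, hx2, hx3⟩
  have hnbrγ : ∀ s ∈ stepsOf u0 W, nbr s.1 s.2 := by
    intro s hs
    have hs' : s ∈ stepsOf u0 L1 ++ stepsOf ((c : ℤ), (l : ℤ)) (rowWalk l c k) := by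
      rw [← hsplit, hSγ]; exact hs
    rcases List.mem_append.mp hs' with h | h
    · exact (hP1R s h).1
    · obtain ⟨x', _, _, rfl⟩ := hρstep s h
      simp only [nbr]
      omega
  -- membership helper
  have hmem : ∀ s ∈ Sγ, (s ∈ stepsOf u0 L1) ∨ (s ∈ stepsOf ((c:ℤ),(l:ℤ)) (rowWalk l c k)) := by
    intro s hs
    rw [hsplit] at hs
    exact List.mem_append.mp hs
  -- P1 part of travH counts at in-box edges vanishes
  have hP1H0 : ∀ e h : ℤ, 1 ≤ e → e ≤ n → 0 ≤ h → h ≤ l →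
      (stepsOf u0 L1).countP (travH e h) = 0 := by
    intro e h he1 he2 hh0 hhl
    rw [List.countP_eq_zero]
    intro s hs htr
    have hRs := hP1R s hs
    simp only [travH, decide_eq_true_iff] at htr
    rcases htr with ⟨hs1, hs2⟩ | ⟨hs1, hs2⟩ <;>
      exact hRs.2.2 (by rw [hs1, hs2]; exact ⟨inBox_iff.mpr (by omega), inBox_iff.mpr (by omega)⟩)
  -- ρ part of travH at heights ≠ l vanishes
  have hρH : ∀ e h : ℤ, h ≠ l →
      (stepsOf ((c:ℤ),(l:ℤ)) (rowWalk l c k)).countP (travH e h) = 0 := by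
    intro e h hne
    rw [List.countP_eq_zero]
    intro s hs htr
    obtain ⟨x', _, _, rfl⟩ := hρstep s hs
    simp only [travH, decide_eq_true_iff, Prod.mk.injEq] at htr
    omega
  -- ρ part of travV vanishes
  have hρV : ∀ x y : ℤ,
      (stepsOf ((c:ℤ),(l:ℤ)) (rowWalk l c k)).countP (travV x y) = 0 := by
    intro x y
    rw [List.countP_eq_zero]
    intro s hs htr
    obtain ⟨x', _, _, rfl⟩ := hρstep s hs
    simp only [travV, decide_eq_true_iff, Prod.mk.injEq] at htr
    omega
  -- full travH counts
  have hγH_in : ∀ e h : ℤ, 1 ≤ e → e ≤ n → 0 ≤ h → h ≤ l → ¬(h = l ∧ a + 1 ≤ e ∧ e ≤ c) →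
      Sγ.countP (travH e h) = 0 := by
    intro e h he1 he2 hh0 hhl hnot
    rw [hsplit, List.countP_append, hP1H0 e h he1 he2 hh0 hhl]
    by_cases hl' : h = l
    · subst hl'
      rw [rowWalk_countH, if_neg (by omega)]
    · rw [hρH e h hl']
  have hγH_top : ∀ e : ℤ, a + 1 ≤ e → e ≤ c → Sγ.countP (travH e l) = 1 := by
    intro e he1 he2
    rw [hsplit, List.countP_append, hP1H0 e l (by omega) (by omega) (by omega) le_rfl,
      rowWalk_countH, if_pos (by omega)]
  -- travV parity at the south boundary vanishes
  have hγV0 : ∀ x : ℤ, 1 ≤ x → x ≤ n - 1 →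
      ((Sγ.countP (travV x (-1)) : ℕ) : ZMod 2) = 0 := by
    intro x hx1 hx2
    have hsplitV : Sγ.countP (travV x (-1)) =
        Sγ.countP (fun s => decide (s.1 = ((x : ℤ), (0 : ℤ))))
          + Sγ.countP (fun s => decide (s.2 = ((x : ℤ), (0 : ℤ)))) := by
      apply countP_split
      intro s hs
      rcases hmem s hs with h | h
      · have hRs := hP1R s h
        obtain ⟨hn', hw', hb'⟩ := hRs
        obtain ⟨⟨sx1, sy1⟩, sx2, sy2⟩ := s
        simp only [nbr] at hn'
        simp only [inBox_iff] at hb'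
        simp only [travV, decide_eq_true_iff, Prod.mk.injEq]
        refine ⟨⟨fun hh => by omega, fun hh => ?_⟩, by omega⟩
        rcases hh with hh | hh
        · right
          have hnb : ¬(0 ≤ sx2 ∧ sx2 ≤ n ∧ 0 ≤ sy2 ∧ sy2 ≤ l) :=
            fun hcon => hb' ⟨⟨by omega, by omega, by omega, by omega⟩, hcon⟩
          omega
        · left
          have hnb : ¬(0 ≤ sx1 ∧ sx1 ≤ n ∧ 0 ≤ sy1 ∧ sy1 ≤ l) :=
            fun hcon => hb' ⟨hcon, ⟨by omega, by omega, by omega, by omega⟩⟩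
          omega
      · obtain ⟨x', _, _, rfl⟩ := hρstep s h
        simp only [travV, decide_eq_true_iff, Prod.mk.injEq]
        constructor
        · constructor
          · intro hh; omega
          · intro hh; omega
        · omega
    have hinc := incidence_parity ((x : ℤ), (0 : ℤ)) u0 W
    rw [hlastW] at hinc
    have hne : ¬(u0 = ((x : ℤ), (0 : ℤ))) := by
      rw [hu0]; simp only [Prod.mk.injEq, not_and]; omega
    rw [hsplitV]
    push_cast
    rw [← hSγ] at hinc
    rw [hinc]
    simp [indB, hne]
  -- column telescopes
  have col : ∀ (e : ℤ), 1 ≤ e → e ≤ n → ∀ t : ZMod 2,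
      ((Sγ.countP (travH e l) : ℕ) : ZMod 2) = t →
      ∀ m : ℕ, (m : ℤ) ≤ l + 1 →
        sig Sγ (e, l - (m : ℤ)) = sig Sγ (e, l) + (if m = 0 then 0 else t) := by
    intro e he1 he2 t ht m
    induction m with
    | zero => intro _; simp
    | succ m ih =>
      intro hm
      have hrv := sig_ruleV Sγ e (l - (m : ℤ) - 1)
      rw [show l - (m : ℤ) - 1 + 1 = l - (m : ℤ) from by ring] at hrv
      have hstep : sig Sγ (e, l - ((m + 1 : ℕ) : ℤ))
          = sig Sγ (e, l - (m : ℤ)) + ((Sγ.countP (travH e (l - (m : ℤ))) : ℕ) : ZMod 2) := by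
        rw [show l - ((m + 1 : ℕ) : ℤ) = l - (m : ℤ) - 1 from by push_cast; ring]
        exact hrv
      rw [hstep, ih (by omega)]
      by_cases hm0 : m = 0
      · subst hm0
        simp only [Nat.cast_zero, sub_zero, if_pos rfl, add_zero]
        rw [ht]
        simp
      · rw [hγH_in e (l - (m : ℤ)) he1 he2 (by omega) (by omega) (by omega)]
        simp only [if_neg hm0, Nat.cast_zero, add_zero]
        simp
  have hmL : ((l + 1).toNat : ℤ) = l + 1 := Int.toNat_of_nonneg (by omega)
  have hmL0 : (l + 1).toNat ≠ 0 := by omega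
  have colB : sig Sγ ((b : ℤ), (-1 : ℤ)) = sig Sγ ((b : ℤ), l) + 1 := by
    have := col b (by omega) (by omega) 1
      (by rw [hγH_top b (by omega) (by omega)]; norm_num) (l + 1).toNat (by omega)
    rw [if_neg hmL0] at this
    rw [show l - (((l + 1).toNat : ℕ) : ℤ) = -1 from by omega] at this
    exact this
  have colD : sig Sγ ((d : ℤ), (-1 : ℤ)) = sig Sγ ((d : ℤ), l) := by
    have := col d (by omega) (by omega) 0
      (by rw [hγH_in d l (by omega) (by omega) (by omega) le_rfl (by omega)]; norm_num)
      (l + 1).toNat (by omega)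
    rw [if_neg hmL0] at this
    rw [show l - (((l + 1).toNat : ℕ) : ℤ) = -1 from by omega] at this
    rw [this, add_zero]
  -- row telescope
  have row : ∀ j : ℕ, (b + (j : ℤ)) ≤ d → sig Sγ ((b + (j : ℤ)), (-1 : ℤ)) = sig Sγ ((b : ℤ), (-1 : ℤ)) := by
    intro j
    induction j with
    | zero => intro _; norm_num
    | succ j ih =>
      intro hj
      have hrh := ruleH u0 W (b + (j : ℤ)) (-1) hnbrγ hlastW
      rw [← hSγ] at hrh
      rw [hγV0 (b + (j : ℤ)) (by omega) (by omega)] at hrh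
      have h2' := zmod2_eq_of_add_eq_zero _ _ hrh
      rw [show (b + ((j + 1 : ℕ) : ℤ)) = (b + (j : ℤ)) + 1 from by push_cast; ring]
      rw [h2', ih (by omega)]
  -- constancy of sig along P2
  have step2 : ∀ w1 w2 : V, R w1 w2 → w1 ∉ (u0 :: L1) → w2 ∉ (u0 :: L1) →
      sig Sγ w1 = sig Sγ w2 := by
    intro w1 w2 hR12 hw1 hw2
    obtain ⟨wx1, wy1⟩ := w1
    obtain ⟨wx2, wy2⟩ := w2
    obtain ⟨hn12, hω12, hbox12⟩ := hR12
    have hHcnt : ∀ x y : ℤ, ((x, y) = ((wx1 : ℤ), (wy1 : ℤ)) ∨ (x, y) = (wx2, wy2)) →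
        (x, y + 1) = ((wx1 : ℤ), (wy1 : ℤ)) ∨ (x, y + 1) = (wx2, wy2) →
        Sγ.countP (travH x (y + 1)) = 0 := by
      intro x y hlow hhigh
      rw [List.countP_eq_zero]
      intro s hs htr
      rcases hmem s hs with h | h
      · -- a P1 step traversing the edge has the upper vertex on P1
        have hm := steps_mem h
        simp only [travH, decide_eq_true_iff] at htr
        have hup : ((x : ℤ), y + 1) ∈ u0 :: L1 := by
          rcases htr with ⟨hs1, hs2⟩ | ⟨hs1, hs2⟩
          · rw [← hs2]; exact hm.2
          · rw [← hs1]; exact hm.1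
        rcases hhigh with hh | hh
        · exact hw1 (by rw [← hh]; exact hup)
        · exact hw2 (by rw [← hh]; exact hup)
      · -- a ρ step: forces the P2 step to be inside the box
        obtain ⟨x', hx1, hx2, rfl⟩ := hρstep s h
        simp only [travH, decide_eq_true_iff, Prod.mk.injEq] at htr
        have hxx : x = x' ∧ y + 1 = l := by omega
        apply hbox12
        have hlow' : ((wx1 : ℤ) = x ∧ (wy1 : ℤ) = y) ∨ ((wx2 : ℤ) = x ∧ (wy2 : ℤ) = y) := by
          rcases hlow with hh | hh <;> [left; right] <;>
            (rw [Prod.mk.injEq] at hh; exact ⟨hh.1.symm, hh.2.symm⟩)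
        have hhigh' : ((wx1 : ℤ) = x ∧ (wy1 : ℤ) = y + 1) ∨ ((wx2 : ℤ) = x ∧ (wy2 : ℤ) = y + 1) := by
          rcases hhigh with hh | hh <;> [left; right] <;>
            (rw [Prod.mk.injEq] at hh; exact ⟨hh.1.symm, hh.2.symm⟩)
        simp only [nbr] at hn12
        exact ⟨inBox_iff.mpr (by omega), inBox_iff.mpr (by omega)⟩
    have hVcnt : ∀ x y : ℤ, ((x, y) = ((wx1 : ℤ), (wy1 : ℤ)) ∨ (x, y) = (wx2, wy2)) →
        Sγ.countP (travV x y) = 0 := by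
      intro x y hlow
      rw [List.countP_eq_zero]
      intro s hs htr
      rcases hmem s hs with h | h
      · have hm := steps_mem h
        simp only [travV, decide_eq_true_iff] at htr
        have hup : ((x : ℤ), y) ∈ u0 :: L1 := by
          rcases htr with ⟨hs1, hs2⟩ | ⟨hs1, hs2⟩
          · rw [← hs1]; exact hm.1
          · rw [← hs2]; exact hm.2
        rcases hlow with hh | hh
        · exact hw1 (by rw [← hh]; exact hup)
        · exact hw2 (by rw [← hh]; exact hup)
      · obtain ⟨x', hx1, hx2, rfl⟩ := hρstep s h
        simp only [travV, decide_eq_true_iff, Prod.mk.injEq] at htr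
        omega
    simp only [nbr] at hn12
    have hcase : (wx2 = wx1 ∧ wy2 = wy1 + 1) ∨ (wx1 = wx2 ∧ wy1 = wy2 + 1)
        ∨ (wy2 = wy1 ∧ wx2 = wx1 + 1) ∨ (wy1 = wy2 ∧ wx1 = wx2 + 1) := by omega
    rcases hcase with ⟨hx, hy⟩ | ⟨hx, hy⟩ | ⟨hy, hx⟩ | ⟨hy, hx⟩
    · -- vertical up
      have := sig_ruleV Sγ wx1 wy1
      rw [hHcnt wx1 wy1 (Or.inl rfl) (Or.inr (by rw [Prod.mk.injEq]; omega))] at this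
      rw [this]
      norm_num
      congr 1
      rw [Prod.mk.injEq]; omega
    · -- vertical down
      have := sig_ruleV Sγ wx2 wy2
      rw [hHcnt wx2 wy2 (Or.inr rfl) (Or.inl (by rw [Prod.mk.injEq]; omega))] at this
      rw [show ((wx1 : ℤ), (wy1 : ℤ)) = (wx2, wy2 + 1) from by rw [Prod.mk.injEq]; omega]
      rw [this]
      norm_num
    · -- horizontal right
      have hrh := ruleH u0 W wx1 wy1 hnbrγ hlastW
      rw [← hSγ] at hrh
      rw [hVcnt wx1 wy1 (Or.inl rfl)] at hrh
      norm_num at hrh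
      have h2' := zmod2_eq_of_add_eq_zero _ _ hrh
      rw [show ((wx2 : ℤ), (wy2 : ℤ)) = (wx1 + 1, wy1) from by rw [Prod.mk.injEq]; omega]
      exact h2'.symm
    · -- horizontal left
      have hrh := ruleH u0 W wx2 wy2 hnbrγ hlastW
      rw [← hSγ] at hrh
      rw [hVcnt wx2 wy2 (Or.inr rfl)] at hrh
      norm_num at hrh
      have h2' := zmod2_eq_of_add_eq_zero _ _ hrh
      rw [show ((wx1 : ℤ), (wy1 : ℤ)) = (wx2 + 1, wy2) from by rw [Prod.mk.injEq]; omega]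
      exact h2'
  have const2 : ∀ (u : V) (L : List V), List.Chain R u L →
      (∀ v ∈ u :: L, v ∉ (u0 :: L1)) → sig Sγ u = sig Sγ (lastOf u L) := by
    intro u L
    induction L generalizing u with
    | nil => intro _ _; rfl
    | cons w L ih =>
      intro hC hdis
      rw [List.Chain, List.chain_cons] at hC
      rw [lastOf_cons, ← ih w hC.2 (fun v hv => hdis v (List.mem_cons.mpr (Or.inr hv)))]
      exact step2 u w hC.1 (hdis u (by simp)) (hdis w (by simp))
  have hP2const : sig Sγ ((b : ℤ), l) = sig Sγ ((d : ℤ), l) := by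
    have := const2 ((b : ℤ), l) L2 hC2 (fun v hv hv1 => hshare v hv1 hv)
    rwa [hE2] at this
  -- final contradiction
  have hrow : sig Sγ ((d : ℤ), (-1 : ℤ)) = sig Sγ ((b : ℤ), (-1 : ℤ)) := by
    have := row (d - b).toNat (by omega)
    rwa [show (b + (((d - b).toNat : ℕ) : ℤ)) = d from by omega] at this
  have : sig Sγ ((b : ℤ), l) = sig Sγ ((b : ℤ), l) + 1 := by
    calc sig Sγ ((b : ℤ), l) = sig Sγ ((d : ℤ), l) := hP2const
    _ = sig Sγ ((d : ℤ), (-1 : ℤ)) := colD.symm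
    _ = sig Sγ ((b : ℤ), (-1 : ℤ)) := hrow
    _ = sig Sγ ((b : ℤ), l) + 1 := colB
  have hbad : (1 : ZMod 2) = 0 := by
    have h0 := this
    nth_rewrite 1 [← add_zero (sig Sγ ((b : ℤ), l))] at h0
    exact (add_left_cancel h0).symm
  exact absurd hbad (by decide)
end S4

/-- Intersections of overlapping disconnecting intervals:
if `a < b < c < d` and `[a,c]`, `[b,d]` are disconnecting intervals, then in the
wired case `[a,b]`, `[b,c]`, `[c,d]`, `[a,d]` are all wired-type disconnecting
intervals, and in the free case `[a,b-1]`, `[b,c]`, `[c+1,d]`, `[a,d]` are all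
free-type disconnecting intervals. -/
theorem statement4 (n l : ℤ) (hn : 0 < n) (hl : 0 < l)
    (ξ : ℤ × ℤ → ℤ × ℤ → Prop)
    (hpart : BoundaryPartition n l ξ) (hreal : Realizable n l ξ)
    (hfree : FreeOnSEW n l ξ)
    (a b c d : ℤ) (ha : 0 ≤ a) (hab : a < b) (hbc : b < c) (hcd : c < d) (hd : d ≤ n) :
    ((WiredType l ξ a c ∧ WiredType l ξ b d) →
        WiredType l ξ a b ∧ WiredType l ξ b c ∧ WiredType l ξ c d ∧ WiredType l ξ a d) ∧
      ((FreeType n l ξ a c ∧ FreeType n l ξ b d) →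
        FreeType n l ξ a (b - 1) ∧ FreeType n l ξ b c ∧ FreeType n l ξ (c + 1) d ∧
          FreeType n l ξ a d) := by
  obtain ⟨hequiv, hblocks⟩ := hpart
  have hBa : onBoundary n l ((a : ℤ), l) :=
    ⟨⟨ha, by omega, by omega, le_rfl⟩, Or.inr (Or.inr (Or.inr rfl))⟩
  have hBb : onBoundary n l ((b : ℤ), l) :=
    ⟨⟨by omega, by omega, by omega, le_rfl⟩, Or.inr (Or.inr (Or.inr rfl))⟩
  have hBc : onBoundary n l ((c : ℤ), l) :=
    ⟨⟨by omega, by omega, by omega, le_rfl⟩, Or.inr (Or.inr (Or.inr rfl))⟩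
  have hBd : onBoundary n l ((d : ℤ), l) :=
    ⟨⟨by omega, hd, by omega, le_rfl⟩, Or.inr (Or.inr (Or.inr rfl))⟩
  constructor
  · rintro ⟨hac, hbd⟩
    obtain ⟨ω, hω⟩ := hreal
    have hac' : extConnected n l ω ((a : ℤ), l) ((c : ℤ), l) := (hω _ _ hBa hBc).mp hac
    have hbd' : extConnected n l ω ((b : ℤ), l) ((d : ℤ), l) := (hω _ _ hBb hBd).mp hbd
    have hab' : extConnected n l ω ((a : ℤ), l) ((b : ℤ), l) :=
      S4.wired_main n l hl ω a b c d ha hab hbc hcd hd hac' hbd'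
    have hξab : ξ ((a : ℤ), l) ((b : ℤ), l) := (hω _ _ hBa hBb).mpr hab'
    have hξbc : ξ ((b : ℤ), l) ((c : ℤ), l) := hequiv.trans (hequiv.symm hξab) hac
    have hξcd : ξ ((c : ℤ), l) ((d : ℤ), l) := hequiv.trans (hequiv.symm hξbc) hbd
    have hξad : ξ ((a : ℤ), l) ((d : ℤ), l) := hequiv.trans hξab hbd
    exact ⟨hξab, hξbc, hξcd, hξad⟩
  · rintro ⟨hfac, hfbd⟩
    refine ⟨?_, ?_, ?_, ?_⟩
    · intro x y hx1 hx2 hy0 hyn hcase hxy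
      rcases hcase with hy | hy
      · exact hfac x y (by omega) (by omega) hy0 hyn (Or.inl hy) hxy
      · by_cases hyc : y ≤ c
        · exact hfbd y x (by omega) (by omega) (by omega) (by omega)
            (Or.inl (by omega)) (hequiv.symm hxy)
        · exact hfac x y (by omega) (by omega) hy0 hyn (Or.inr (by omega)) hxy
    · intro x y hx1 hx2 hy0 hyn hcase hxy
      rcases hcase with hy | hy
      · exact hfbd x y (by omega) (by omega) hy0 hyn (Or.inl hy) hxy
      · exact hfac x y (by omega) (by omega) hy0 hyn (Or.inr (by omega)) hxy
    · intro x y hx1 hx2 hy0 hyn hcase hxy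
      rcases hcase with hy | hy
      · by_cases hyb : y < b
        · exact hfbd x y (by omega) (by omega) hy0 hyn (Or.inl hyb) hxy
        · exact hfac y x (by omega) (by omega) (by omega) (by omega)
            (Or.inr (by omega)) (hequiv.symm hxy)
      · exact hfbd x y (by omega) (by omega) hy0 hyn (Or.inr hy) hxy
    · intro x y hx1 hx2 hy0 hyn hcase hxy
      by_cases hxc : x ≤ c
      · exact hfac x y hx1 hxc hy0 hyn (by omega) hxy
      · exact hfbd x y (by omega) hx2 hy0 hyn (by omega) hxy
end

section
/- Let P be the transition matrix of an irreducible Markov chain on a finite state space Ω, reversible with respect to a probability distribution μ. For any nonempty A ⊂ Ω with μ(A) ≤ 1/2, define the conductance Φ(A) = Q(A,A^c)/μ(A) where Q(A,A^c) = Σ_{ω∈A, ω'∈A^c} μ(ω)P(ω,ω'), and let Φ_* be the minimum of Φ(A) over such A. Then the spectral gap of P satisfies Φ_*²/2 ≤ gap(P) ≤ 2Φ_*. -/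
open Finset

/-- Dirichlet form `E(f,f) = (1/2) Σ_{x,y} μ(x) P(x,y) (f(x)-f(y))²` of a
reversible chain. -/
noncomputable def dirichletForm {Ω : Type*} [Fintype Ω]
    (μ : Ω → ℝ) (P : Matrix Ω Ω ℝ) (f : Ω → ℝ) : ℝ :=
  (1 / 2) * ∑ x, ∑ y, μ x * P x y * (f x - f y) ^ 2

/-- Variance of `f` under `μ`. -/
noncomputable def varForm {Ω : Type*} [Fintype Ω] (μ : Ω → ℝ) (f : Ω → ℝ) : ℝ :=
  ∑ x, μ x * (f x - ∑ y, μ y * f y) ^ 2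

/-- The spectral gap `1 - λ₂` of a reversible chain, via its variational
characterization as the infimum of `E(f,f)/Var(f)` over non-constant `f`. -/
noncomputable def specGap {Ω : Type*} [Fintype Ω] (μ : Ω → ℝ) (P : Matrix Ω Ω ℝ) : ℝ :=
  sInf {r : ℝ | ∃ f : Ω → ℝ, varForm μ f ≠ 0 ∧ r = dirichletForm μ P f / varForm μ f}

/-- The edge measure `Q(A,Aᶜ)`. -/
noncomputable def edgeFlow {Ω : Type*} [Fintype Ω] [DecidableEq Ω]
    (μ : Ω → ℝ) (P : Matrix Ω Ω ℝ) (A : Finset Ω) : ℝ :=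
  ∑ x ∈ A, ∑ y ∈ Aᶜ, μ x * P x y

/-- The conductance `Φ(A) = Q(A,Aᶜ)/μ(A)` of a set `A`. -/
noncomputable def conductance {Ω : Type*} [Fintype Ω] [DecidableEq Ω]
    (μ : Ω → ℝ) (P : Matrix Ω Ω ℝ) (A : Finset Ω) : ℝ :=
  edgeFlow μ P A / ∑ x ∈ A, μ x

/-- `Φ_* = min {Φ(A) : A ≠ ∅, μ(A) ≤ 1/2}`. -/
noncomputable def minConductance {Ω : Type*} [Fintype Ω] [DecidableEq Ω]
    (μ : Ω → ℝ) (P : Matrix Ω Ω ℝ) : ℝ :=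
  sInf {r : ℝ | ∃ A : Finset Ω, A.Nonempty ∧ (∑ x ∈ A, μ x) ≤ 1 / 2 ∧
    r = conductance μ P A}

lemma coarea {Ω : Type*} [Fintype Ω] [DecidableEq Ω]
    (μ : Ω → ℝ) (P : Matrix Ω Ω ℝ)
    (hP0 : ∀ x y, 0 ≤ P x y) (hμ0 : ∀ x, 0 < μ x) (Φ : ℝ)
    (hΦ : ∀ A : Finset Ω, A.Nonempty → (∑ x ∈ A, μ x) ≤ 1/2 →
      Φ * ∑ x ∈ A, μ x ≤ edgeFlow μ P A) :
    ∀ (n : ℕ) (F : Ω → ℝ), ((univ.image F).erase 0).card ≤ n →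
      (∀ x, 0 ≤ F x) →
      (∑ x ∈ univ.filter (fun x => F x ≠ 0), μ x) ≤ 1/2 →
      Φ * ∑ x, μ x * F x ≤ ∑ x, ∑ y, μ x * P x y * max (F x - F y) 0 := by
  intro n
  induction n with
  | zero =>
    intro F hcard hF0 _
    have hF : ∀ x, F x = 0 := by
      intro x
      by_contra hx
      have : F x ∈ (univ.image F).erase 0 :=
        mem_erase.2 ⟨hx, mem_image_of_mem F (mem_univ x)⟩
      have := card_pos.2 ⟨_, this⟩
      omega
    have h1 : ∑ x, μ x * F x = 0 := by
      apply Finset.sum_eq_zero; intro x _; rw [hF x]; ring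
    rw [h1, mul_zero]
    apply Finset.sum_nonneg; intro x _
    apply Finset.sum_nonneg; intro y _
    have : max (F x - F y) 0 = 0 := by rw [hF x, hF y]; simp
    rw [this]; ring_nf; exact le_refl 0
  | succ n ih =>
    intro F hcard hF0 hsupp
    by_cases hzero : ((univ.image F).erase 0) = ∅
    · -- F ≡ 0 again
      have hF : ∀ x, F x = 0 := by
        intro x
        by_contra hx
        have : F x ∈ (univ.image F).erase 0 :=
          mem_erase.2 ⟨hx, mem_image_of_mem F (mem_univ x)⟩
        rw [hzero] at this; exact absurd this (notMem_empty _)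
      have h1 : ∑ x, μ x * F x = 0 := by
        apply Finset.sum_eq_zero; intro x _; rw [hF x]; ring
      rw [h1, mul_zero]
      apply Finset.sum_nonneg; intro x _
      apply Finset.sum_nonneg; intro y _
      have : max (F x - F y) 0 = 0 := by rw [hF x, hF y]; simp
      rw [this]; ring_nf; exact le_refl 0
    · set A : Finset Ω := univ.filter (fun x => F x ≠ 0) with hA
      have hAne : A.Nonempty := by
        rw [← not_nonempty_iff_eq_empty] at hzero
        push_neg at hzero
        obtain ⟨v, hv⟩ := hzero
        rw [mem_erase] at hv
        obtain ⟨x, _, hx⟩ := mem_image.1 hv.2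
        exact ⟨x, mem_filter.2 ⟨mem_univ x, by rw [hx]; exact hv.1⟩⟩
      have himne : (A.image F).Nonempty := hAne.image F
      set c : ℝ := (A.image F).min' himne with hc
      have hcA : ∀ x ∈ A, c ≤ F x := fun x hx =>
        min'_le _ _ (mem_image_of_mem F hx)
      have hcmem : c ∈ A.image F := min'_mem _ _
      obtain ⟨x₀, hx₀A, hx₀⟩ := mem_image.1 hcmem
      have hc0 : 0 < c := by
        rw [← hx₀]
        exact lt_of_le_of_ne (hF0 x₀) (Ne.symm (mem_filter.1 hx₀A).2)
      set F' : Ω → ℝ := fun x => if F x = 0 then 0 else F x - c with hF'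
      have hF'0 : ∀ x, 0 ≤ F' x := by
        intro x; simp only [hF']
        split
        · exact le_refl 0
        · rename_i h
          have : x ∈ A := mem_filter.2 ⟨mem_univ x, h⟩
          linarith [hcA x this]
      have hsub : (univ.filter (fun x => F' x ≠ 0)) ⊆ A := by
        intro x hx
        rw [mem_filter] at hx
        refine mem_filter.2 ⟨mem_univ x, ?_⟩
        intro h
        apply hx.2
        simp [hF', h]
      -- card decrease
      have hcard' : ((univ.image F').erase 0).card ≤ n := by
        have hsub2 : (univ.image F').erase 0 ⊆
            (((univ.image F).erase 0).erase c).image (· - c) := by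
          intro w hw
          rw [mem_erase] at hw
          obtain ⟨x, _, hx⟩ := mem_image.1 hw.2
          have hFx : F x ≠ 0 := by
            intro h; apply hw.1; rw [← hx]; simp [hF', h]
          have hwx : w = F x - c := by rw [← hx]; simp [hF', hFx]
          apply mem_image.2
          refine ⟨F x, ?_, by rw [hwx]⟩
          rw [mem_erase, mem_erase]
          refine ⟨?_, hFx, mem_image_of_mem F (mem_univ x)⟩
          intro h; apply hw.1; rw [hwx, h]; ring
        have hcmem2 : c ∈ (univ.image F).erase 0 := by
          rw [mem_erase]
          refine ⟨ne_of_gt hc0, ?_⟩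
          exact hx₀ ▸ mem_image_of_mem F (mem_univ x₀)
        calc ((univ.image F').erase 0).card
            ≤ ((((univ.image F).erase 0).erase c).image (· - c)).card :=
              card_le_card hsub2
          _ ≤ (((univ.image F).erase 0).erase c).card := card_image_le
          _ = ((univ.image F).erase 0).card - 1 := card_erase_of_mem hcmem2
          _ ≤ n := by omega
      have hsupp' : (∑ x ∈ univ.filter (fun x => F' x ≠ 0), μ x) ≤ 1/2 :=
        le_trans (Finset.sum_le_sum_of_subset_of_nonneg hsub
          (fun x _ _ => (hμ0 x).le)) hsupp
      have key := ih F' hcard' hF'0 hsupp'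
      -- sum decomposition
      have hcsum : c * ∑ x ∈ A, μ x = ∑ x, if F x ≠ 0 then c * μ x else 0 := by
        rw [Finset.mul_sum, hA, Finset.sum_filter]
      have hdecomp : ∑ x, μ x * F x = (∑ x, μ x * F' x) + c * ∑ x ∈ A, μ x := by
        rw [hcsum, ← Finset.sum_add_distrib]
        apply Finset.sum_congr rfl
        intro x _
        by_cases h : F x = 0
        · simp [hF', h]
        · simp only [hF', h, if_neg h, ne_eq, not_false_iff, if_pos]
          ring
      -- pointwise inequality for the flows
      have hpt : ∀ x y, μ x * P x y * max (F' x - F' y) 0 +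
          (if x ∈ A ∧ y ∉ A then c * (μ x * P x y) else 0)
          ≤ μ x * P x y * max (F x - F y) 0 := by
        intro x y
        have hμP : 0 ≤ μ x * P x y := mul_nonneg (hμ0 x).le (hP0 x y)
        by_cases hx : F x = 0
        · have hxA : x ∉ A := by rw [hA, mem_filter]; push_neg; intro _; exact hx
          by_cases hy : F y = 0
          · simp [hF', hx, hy, hxA]
          · have h1 : F' x - F' y ≤ 0 := by
              simp only [hF', hx, if_pos, if_neg hy]
              have := hcA y (mem_filter.2 ⟨mem_univ y, hy⟩)
              linarith [hF0 y]
            have h2 : F x - F y ≤ 0 := by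
              rw [hx]; linarith [hF0 y, lt_of_le_of_ne (hF0 y) (Ne.symm hy)]
            rw [max_eq_right h1, max_eq_right h2]
            simp [hxA]
        · have hxA : x ∈ A := mem_filter.2 ⟨mem_univ x, hx⟩
          have hcx := hcA x hxA
          by_cases hy : F y = 0
          · have hyA : y ∉ A := by rw [hA, mem_filter]; push_neg; intro _; exact hy
            have h1 : F' x - F' y = F x - c := by simp [hF', hx, hy]
            have h2 : max (F' x - F' y) 0 = F x - c := by
              rw [h1, max_eq_left]; linarith
            have h3 : max (F x - F y) 0 = F x := by
              rw [hy, sub_zero, max_eq_left (hF0 x)]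
            rw [h2, h3]
            simp only [hxA, hyA, not_false_iff, and_self, if_pos]
            nlinarith
          · have hyA : y ∈ A := mem_filter.2 ⟨mem_univ y, hy⟩
            have h1 : F' x - F' y = F x - F y := by simp [hF', hx, hy]
            rw [h1]
            simp [hxA, hyA]
      -- sum of the indicator part equals c * edgeFlow A
      have hflow : ∑ x, ∑ y, (if x ∈ A ∧ y ∉ A then c * (μ x * P x y) else 0)
          = c * edgeFlow μ P A := by
        rw [edgeFlow, Finset.mul_sum]
        rw [← Finset.sum_filter_add_sum_filter_not univ (fun x => x ∈ A)]
        have h2 : ∀ x ∈ univ.filter (fun x => x ∉ A),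
            ∑ y, (if x ∈ A ∧ y ∉ A then c * (μ x * P x y) else 0) = 0 := by
          intro x hx
          rw [mem_filter] at hx
          apply Finset.sum_eq_zero
          intro y _
          simp [hx.2]
        rw [Finset.sum_congr rfl h2, Finset.sum_const, smul_zero, add_zero]
        have h3 : univ.filter (fun x => x ∈ A) = A := by
          ext x; simp
        rw [h3]
        apply Finset.sum_congr rfl
        intro x hx
        rw [Finset.mul_sum]
        rw [← Finset.sum_filter_add_sum_filter_not univ (fun y => y ∉ A)]
        have h4 : ∀ y ∈ univ.filter (fun y => ¬ y ∉ A),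
            (if x ∈ A ∧ y ∉ A then c * (μ x * P x y) else 0) = 0 := by
          intro y hy
          rw [mem_filter] at hy
          simp [hy.2]
        rw [Finset.sum_congr rfl h4, Finset.sum_const, smul_zero, add_zero]
        have h5 : univ.filter (fun y => y ∉ A) = Aᶜ := by
          ext y; simp
        rw [h5]
        apply Finset.sum_congr rfl
        intro y hy
        rw [mem_compl] at hy
        simp [hx, hy]
      -- conclude
      have hQ : Φ * ∑ x ∈ A, μ x ≤ edgeFlow μ P A := hΦ A hAne hsupp
      calc Φ * ∑ x, μ x * F x
          = Φ * ∑ x, μ x * F' x + Φ * (∑ x ∈ A, μ x) * c := by rw [hdecomp]; ring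
        _ ≤ (∑ x, ∑ y, μ x * P x y * max (F' x - F' y) 0) + edgeFlow μ P A * c := by
            apply add_le_add key
            apply mul_le_mul_of_nonneg_right hQ hc0.le
        _ = (∑ x, ∑ y, μ x * P x y * max (F' x - F' y) 0) +
            ∑ x, ∑ y, (if x ∈ A ∧ y ∉ A then c * (μ x * P x y) else 0) := by
            rw [hflow]; ring
        _ = ∑ x, ∑ y, (μ x * P x y * max (F' x - F' y) 0 +
            (if x ∈ A ∧ y ∉ A then c * (μ x * P x y) else 0)) := by
            rw [← Finset.sum_add_distrib]
            apply Finset.sum_congr rfl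
            intro x _
            rw [← Finset.sum_add_distrib]
        _ ≤ ∑ x, ∑ y, μ x * P x y * max (F x - F y) 0 := by
            apply Finset.sum_le_sum
            intro x _
            apply Finset.sum_le_sum
            intro y _
            exact hpt x y

lemma cheeger_one_sided {Ω : Type*} [Fintype Ω] [DecidableEq Ω]
    (μ : Ω → ℝ) (P : Matrix Ω Ω ℝ)
    (hP0 : ∀ x y, 0 ≤ P x y) (hP1 : ∀ x, ∑ y, P x y = 1)
    (hμ0 : ∀ x, 0 < μ x)
    (hrev : ∀ x y, μ x * P x y = μ y * P y x) (Φ : ℝ) (hΦ0 : 0 ≤ Φ)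
    (hΦ : ∀ A : Finset Ω, A.Nonempty → (∑ x ∈ A, μ x) ≤ 1/2 →
      Φ * ∑ x ∈ A, μ x ≤ edgeFlow μ P A)
    (g : Ω → ℝ) (hg0 : ∀ x, 0 ≤ g x)
    (hsupp : (∑ x ∈ univ.filter (fun x => g x ≠ 0), μ x) ≤ 1/2) :
    Φ ^ 2 / 2 * ∑ x, μ x * g x ^ 2 ≤ dirichletForm μ P g := by
  set N : ℝ := ∑ x, μ x * g x ^ 2 with hN
  set E : ℝ := dirichletForm μ P g with hE
  have hμP : ∀ x y, 0 ≤ μ x * P x y := fun x y => mul_nonneg (hμ0 x).le (hP0 x y)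
  have hEnn : 0 ≤ E := by
    rw [hE, dirichletForm]
    apply mul_nonneg (by norm_num)
    apply Finset.sum_nonneg; intro x _
    apply Finset.sum_nonneg; intro y _
    exact mul_nonneg (hμP x y) (sq_nonneg _)
  have hNnn : 0 ≤ N := by
    apply Finset.sum_nonneg; intro x _
    exact mul_nonneg (hμ0 x).le (sq_nonneg _)
  rcases eq_or_lt_of_le hNnn with hN0 | hNpos
  · rw [← hN0, mul_zero]; exact hEnn
  -- coarea applied to F = g²
  have hfiltereq : univ.filter (fun x => g x ^ 2 ≠ 0) = univ.filter (fun x => g x ≠ 0) := by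
    ext x; simp [pow_eq_zero_iff]
  have hco : Φ * N ≤ ∑ x, ∑ y, μ x * P x y * max (g x ^ 2 - g y ^ 2) 0 := by
    apply coarea μ P hP0 hμ0 Φ hΦ (((univ.image (fun x => g x ^ 2)).erase 0).card)
      (fun x => g x ^ 2) le_rfl (fun x => sq_nonneg _)
    rw [hfiltereq]; exact hsupp
  set Spos : ℝ := ∑ x, ∑ y, μ x * P x y * max (g x ^ 2 - g y ^ 2) 0 with hSpos
  set Sabs : ℝ := ∑ x, ∑ y, μ x * P x y * |g x ^ 2 - g y ^ 2| with hSabs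
  -- symmetry : 2 * Spos = Sabs
  have hsym : 2 * Spos = Sabs := by
    have hswap : Spos = ∑ x, ∑ y, μ x * P x y * max (g y ^ 2 - g x ^ 2) 0 := by
      rw [hSpos, Finset.sum_comm]
      apply Finset.sum_congr rfl; intro x _
      apply Finset.sum_congr rfl; intro y _
      rw [hrev y x]
    rw [two_mul]
    nth_rewrite 2 [hswap]
    rw [hSpos, hSabs, ← Finset.sum_add_distrib]
    apply Finset.sum_congr rfl; intro x _
    rw [← Finset.sum_add_distrib]
    apply Finset.sum_congr rfl; intro y _
    rw [← mul_add]
    congr 1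
    rw [show g y ^ 2 - g x ^ 2 = -(g x ^ 2 - g y ^ 2) by ring,
      max_zero_add_max_neg_zero_eq_abs_self]
  -- Cauchy-Schwarz
  set a : Ω × Ω → ℝ := fun p => Real.sqrt (μ p.1 * P p.1 p.2) * |g p.1 - g p.2| with ha
  set b : Ω × Ω → ℝ := fun p => Real.sqrt (μ p.1 * P p.1 p.2) * (g p.1 + g p.2) with hb
  have hab : ∑ p : Ω × Ω, a p * b p = Sabs := by
    rw [hSabs, Fintype.sum_prod_type]
    apply Finset.sum_congr rfl; intro x _
    apply Finset.sum_congr rfl; intro y _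
    have h1 : a (x, y) * b (x, y) =
        (Real.sqrt (μ x * P x y)) ^ 2 * (|g x - g y| * (g x + g y)) := by
      simp only [ha, hb]; ring
    rw [h1, Real.sq_sqrt (hμP x y)]
    have h3 : (0:ℝ) ≤ g x + g y := by linarith [hg0 x, hg0 y]
    have h2 : |g x ^ 2 - g y ^ 2| = |g x - g y| * (g x + g y) := by
      have h4 : g x ^ 2 - g y ^ 2 = (g x - g y) * (g x + g y) := by ring
      rw [h4, abs_mul, abs_of_nonneg h3]
    rw [h2]
  have haa : ∑ p : Ω × Ω, a p ^ 2 = 2 * E := by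
    have h1 : ∑ p : Ω × Ω, a p ^ 2 = ∑ x, ∑ y, μ x * P x y * (g x - g y) ^ 2 := by
      rw [Fintype.sum_prod_type]
      apply Finset.sum_congr rfl; intro x _
      apply Finset.sum_congr rfl; intro y _
      simp only [ha]
      rw [mul_pow, Real.sq_sqrt (hμP x y), sq_abs]
    rw [h1, hE, dirichletForm]; ring
  have hbb : ∑ p : Ω × Ω, b p ^ 2 ≤ 4 * N := by
    have h1 : ∑ p : Ω × Ω, b p ^ 2 = ∑ x, ∑ y, μ x * P x y * (g x + g y) ^ 2 := by
      rw [Fintype.sum_prod_type]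
      apply Finset.sum_congr rfl; intro x _
      apply Finset.sum_congr rfl; intro y _
      simp only [hb]
      rw [mul_pow, Real.sq_sqrt (hμP x y)]
    have h2 : ∑ x, ∑ y, μ x * P x y * (g x + g y) ^ 2 ≤
        ∑ x, ∑ y, μ x * P x y * (2 * g x ^ 2 + 2 * g y ^ 2) := by
      apply Finset.sum_le_sum; intro x _
      apply Finset.sum_le_sum; intro y _
      apply mul_le_mul_of_nonneg_left _ (hμP x y)
      nlinarith [sq_nonneg (g x - g y)]
    have hA : ∑ x, ∑ y, μ x * P x y * g x ^ 2 = N := by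
      refine Finset.sum_congr rfl fun x _ => ?_
      have e1 : ∑ y, μ x * P x y * g x ^ 2 = μ x * g x ^ 2 * ∑ y, P x y := by
        rw [Finset.mul_sum]
        exact Finset.sum_congr rfl fun y _ => by ring
      rw [e1, hP1 x, mul_one]
    have hB : ∑ x, ∑ y, μ x * P x y * g y ^ 2 = N := by
      rw [Finset.sum_comm]
      refine Finset.sum_congr rfl fun y _ => ?_
      have e1 : ∑ x, μ x * P x y * g y ^ 2 = μ y * g y ^ 2 * ∑ x, P y x := by
        rw [Finset.mul_sum]
        exact Finset.sum_congr rfl fun x _ => by rw [hrev x y]; ring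
      rw [e1, hP1 y, mul_one]
    have h3 : ∑ x, ∑ y, μ x * P x y * (2 * g x ^ 2 + 2 * g y ^ 2) = 4 * N := by
      have expand : ∑ x, ∑ y, μ x * P x y * (2 * g x ^ 2 + 2 * g y ^ 2)
          = 2 * (∑ x, ∑ y, μ x * P x y * g x ^ 2)
            + 2 * (∑ x, ∑ y, μ x * P x y * g y ^ 2) := by
        rw [Finset.mul_sum, Finset.mul_sum, ← Finset.sum_add_distrib]
        refine Finset.sum_congr rfl fun x _ => ?_
        rw [Finset.mul_sum, Finset.mul_sum, ← Finset.sum_add_distrib]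
        exact Finset.sum_congr rfl fun y _ => by ring
      rw [expand, hA, hB]; ring
    linarith
  have hcs := Finset.sum_mul_sq_le_sq_mul_sq univ a b
  rw [hab, haa] at hcs
  have h4 : Sabs ^ 2 ≤ 2 * E * (4 * N) :=
    le_trans hcs (mul_le_mul_of_nonneg_left hbb (by linarith))
  have h5 : Φ * N ≤ Sabs / 2 := by linarith
  have h6 : (Φ * N) ^ 2 ≤ (Sabs / 2) ^ 2 :=
    pow_le_pow_left₀ (mul_nonneg hΦ0 hNnn) h5 2
  have h7 : Φ ^ 2 * N ^ 2 ≤ 2 * E * N := by nlinarith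
  nlinarith [hNpos]

lemma sum_ind {Ω : Type*} [Fintype Ω] [DecidableEq Ω] (A : Finset Ω) (h : Ω → Ω → ℝ) :
    ∑ x, ∑ y, (if x ∈ A ∧ y ∉ A then h x y else 0) = ∑ x ∈ A, ∑ y ∈ Aᶜ, h x y := by
  have step : ∀ x, ∑ y, (if x ∈ A ∧ y ∉ A then h x y else 0) =
      if x ∈ A then ∑ y ∈ Aᶜ, h x y else 0 := by
    intro x
    by_cases hx : x ∈ A
    · rw [if_pos hx]
      have : ∀ y, (if x ∈ A ∧ y ∉ A then h x y else 0) = if y ∈ Aᶜ then h x y else 0 := by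
        intro y; by_cases hy : y ∈ A <;> simp [hx, hy]
      rw [Finset.sum_congr rfl (fun y _ => this y), ← Finset.sum_filter]
      congr 1
      ext y; simp
    · rw [if_neg hx]
      apply Finset.sum_eq_zero
      intro y _; simp [hx]
  rw [Finset.sum_congr rfl (fun x _ => step x), ← Finset.sum_filter]
  congr 1
  ext x; simp

lemma edgeFlow_nonneg {Ω : Type*} [Fintype Ω] [DecidableEq Ω]
    (μ : Ω → ℝ) (P : Matrix Ω Ω ℝ) (hP0 : ∀ x y, 0 ≤ P x y) (hμ0 : ∀ x, 0 < μ x)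
    (A : Finset Ω) : 0 ≤ edgeFlow μ P A := by
  apply Finset.sum_nonneg; intro x _
  apply Finset.sum_nonneg; intro y _
  exact mul_nonneg (hμ0 x).le (hP0 x y)

lemma exists_median {Ω : Type*} [Fintype Ω] [DecidableEq Ω] [Nonempty Ω]
    (μ : Ω → ℝ) (hμ0 : ∀ x, 0 < μ x) (hμ1 : ∑ x, μ x = 1) (f : Ω → ℝ) :
    ∃ m : ℝ, (∑ x ∈ univ.filter (fun x => m < f x), μ x) ≤ 1/2 ∧
      (∑ x ∈ univ.filter (fun x => f x < m), μ x) ≤ 1/2 := by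
  have himne : (univ.image f).Nonempty := ⟨f (Classical.arbitrary Ω),
    mem_image_of_mem f (mem_univ _)⟩
  set S : Finset ℝ := (univ.image f).filter
    (fun v => 1/2 ≤ ∑ x ∈ univ.filter (fun x => f x ≤ v), μ x) with hS
  have hSne : S.Nonempty := by
    refine ⟨(univ.image f).max' himne, mem_filter.2 ⟨max'_mem _ _, ?_⟩⟩
    have : univ.filter (fun x => f x ≤ (univ.image f).max' himne) = univ := by
      ext x
      simp only [mem_filter, mem_univ, true_and, iff_true]
      exact le_max' _ _ (mem_image_of_mem f (mem_univ x))
    rw [this, hμ1]; norm_num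
  set m : ℝ := S.min' hSne with hm
  have hmS : m ∈ S := min'_mem _ _
  have hm1 : 1/2 ≤ ∑ x ∈ univ.filter (fun x => f x ≤ m), μ x := (mem_filter.1 hmS).2
  refine ⟨m, ?_, ?_⟩
  · have hpart : (∑ x ∈ univ.filter (fun x => f x ≤ m), μ x) +
        (∑ x ∈ univ.filter (fun x => ¬ f x ≤ m), μ x) = 1 := by
      rw [Finset.sum_filter_add_sum_filter_not, hμ1]
    have : univ.filter (fun x => m < f x) = univ.filter (fun x => ¬ f x ≤ m) := by
      ext x; simp [not_le]
    rw [this]; linarith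
  · by_contra hcon
    push_neg at hcon
    set T : Finset Ω := univ.filter (fun x => f x < m) with hT
    have hTne : T.Nonempty := by
      by_contra h
      rw [not_nonempty_iff_eq_empty] at h
      rw [h, Finset.sum_empty] at hcon
      norm_num at hcon
    set m' : ℝ := (T.image f).max' (hTne.image f) with hm'
    have hm'lt : m' < m := by
      obtain ⟨x, hxT, hx⟩ := mem_image.1 (max'_mem (T.image f) (hTne.image f))
      rw [hm', ← hx]
      exact (mem_filter.1 hxT).2
    have hm'S : m' ∈ S := by
      refine mem_filter.2 ⟨?_, ?_⟩
      · obtain ⟨x, hxT, hx⟩ := mem_image.1 (max'_mem (T.image f) (hTne.image f))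
        rw [hm', ← hx]
        exact mem_image_of_mem f (mem_univ x)
      · have hsub2 : T ⊆ univ.filter (fun x => f x ≤ m') := by
          intro x hx
          refine mem_filter.2 ⟨mem_univ x, ?_⟩
          exact le_max' _ _ (mem_image_of_mem f hx)
        have := Finset.sum_le_sum_of_subset_of_nonneg hsub2
          (fun x _ _ => (hμ0 x).le)
        linarith
    have := min'_le S m' hm'S
    linarith

lemma var_nonneg {Ω : Type*} [Fintype Ω] (μ : Ω → ℝ) (hμ0 : ∀ x, 0 < μ x)
    (f : Ω → ℝ) : 0 ≤ varForm μ f :=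
  Finset.sum_nonneg fun x _ => mul_nonneg (hμ0 x).le (sq_nonneg _)

lemma dirichlet_nonneg {Ω : Type*} [Fintype Ω] (μ : Ω → ℝ) (P : Matrix Ω Ω ℝ)
    (hP0 : ∀ x y, 0 ≤ P x y) (hμ0 : ∀ x, 0 < μ x) (f : Ω → ℝ) :
    0 ≤ dirichletForm μ P f := by
  apply mul_nonneg (by norm_num)
  apply Finset.sum_nonneg; intro x _
  apply Finset.sum_nonneg; intro y _
  exact mul_nonneg (mul_nonneg (hμ0 x).le (hP0 x y)) (sq_nonneg _)

lemma var_indicator {Ω : Type*} [Fintype Ω] [DecidableEq Ω]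
    (μ : Ω → ℝ) (hμ1 : ∑ x, μ x = 1) (A : Finset Ω) :
    varForm μ (fun x => if x ∈ A then (1:ℝ) else 0)
      = (∑ x ∈ A, μ x) * (1 - ∑ x ∈ A, μ x) := by
  set a : ℝ := ∑ x ∈ A, μ x with hadef
  have hcompl : ∑ x ∈ Aᶜ, μ x = 1 - a := by
    have := Finset.sum_add_sum_compl A μ
    rw [hμ1] at this; linarith
  have hmean : ∑ y, μ y * (if y ∈ A then (1:ℝ) else 0) = a := by
    have e : ∀ y, μ y * (if y ∈ A then (1:ℝ) else 0) = if y ∈ A then μ y else 0 := by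
      intro y; by_cases hy : y ∈ A <;> simp [hy]
    rw [Finset.sum_congr rfl (fun y _ => e y), Finset.sum_ite_mem, univ_inter]
  rw [varForm, hmean]
  have hsplit : ∑ x, μ x * ((if x ∈ A then (1:ℝ) else 0) - a)^2
      = (∑ x ∈ A, μ x * (1-a)^2) + ∑ x ∈ Aᶜ, μ x * a^2 := by
    rw [← Finset.sum_add_sum_compl A]
    congr 1
    · exact Finset.sum_congr rfl fun x hx => by rw [if_pos hx]
    · refine Finset.sum_congr rfl fun x hx => ?_
      rw [if_neg (mem_compl.1 hx)]; ring_nf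
  rw [hsplit, ← Finset.sum_mul, ← Finset.sum_mul, hcompl, ← hadef]
  ring

lemma dirichlet_indicator {Ω : Type*} [Fintype Ω] [DecidableEq Ω]
    (μ : Ω → ℝ) (P : Matrix Ω Ω ℝ)
    (hrev : ∀ x y, μ x * P x y = μ y * P y x) (A : Finset Ω) :
    dirichletForm μ P (fun x => if x ∈ A then (1:ℝ) else 0) = edgeFlow μ P A := by
  have hpt : ∀ x y, μ x * P x y *
      ((if x ∈ A then (1:ℝ) else 0) - (if y ∈ A then (1:ℝ) else 0))^2
      = (if x ∈ A ∧ y ∉ A then μ x * P x y else 0)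
        + (if y ∈ A ∧ x ∉ A then μ x * P x y else 0) := by
    intro x y
    by_cases hx : x ∈ A <;> by_cases hy : y ∈ A <;> simp [hx, hy]
  rw [dirichletForm]
  have hsum : ∑ x, ∑ y, μ x * P x y *
      ((if x ∈ A then (1:ℝ) else 0) - (if y ∈ A then (1:ℝ) else 0))^2
      = (∑ x, ∑ y, (if x ∈ A ∧ y ∉ A then μ x * P x y else 0))
        + ∑ x, ∑ y, (if y ∈ A ∧ x ∉ A then μ x * P x y else 0) := by
    rw [← Finset.sum_add_distrib]
    refine Finset.sum_congr rfl fun x _ => ?_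
    rw [← Finset.sum_add_distrib]
    exact Finset.sum_congr rfl fun y _ => hpt x y
  have h1 : ∑ x, ∑ y, (if x ∈ A ∧ y ∉ A then μ x * P x y else 0) = edgeFlow μ P A :=
    sum_ind A _
  have h2 : ∑ x, ∑ y, (if y ∈ A ∧ x ∉ A then μ x * P x y else 0) = edgeFlow μ P A := by
    have e : ∀ x y, (if y ∈ A ∧ x ∉ A then μ x * P x y else 0)
        = (if y ∈ A ∧ x ∉ A then μ y * P y x else 0) := by
      intro x y; rw [hrev x y]
    rw [Finset.sum_congr rfl (fun x _ => Finset.sum_congr rfl (fun y _ => e x y)),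
      Finset.sum_comm]
    exact sum_ind A _
  rw [hsum, h1, h2]
  ring

/-- **Cheeger bounds.** For an irreducible reversible chain,
`Φ_*²/2 ≤ gap(P) ≤ 2 Φ_*`. -/
theorem statement5 {Ω : Type*} [Fintype Ω] [DecidableEq Ω] [Nonempty Ω]
    (μ : Ω → ℝ) (P : Matrix Ω Ω ℝ)
    (hP0 : ∀ x y, 0 ≤ P x y) (hP1 : ∀ x, ∑ y, P x y = 1)
    (hμ0 : ∀ x, 0 < μ x) (hμ1 : ∑ x, μ x = 1)
    (hrev : ∀ x y, μ x * P x y = μ y * P y x)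
    (hirr : ∀ x y, ∃ k : ℕ, 0 < (P ^ k) x y) :
    minConductance μ P ^ 2 / 2 ≤ specGap μ P ∧
      specGap μ P ≤ 2 * minConductance μ P := by
  classical
  by_cases hex : ∃ A : Finset Ω, A.Nonempty ∧ (∑ x ∈ A, μ x) ≤ 1/2
  case neg =>
    -- Ω is a singleton; both quantities are sInf ∅ = 0
    have hsub : ∀ x y : Ω, x = y := by
      by_contra hc
      push_neg at hc
      obtain ⟨x, y, hxy⟩ := hc
      have hx : ¬ ((∑ z ∈ ({x} : Finset Ω), μ z) ≤ 1/2) := fun h =>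
        hex ⟨{x}, singleton_nonempty x, h⟩
      have hy : ¬ ((∑ z ∈ ({y} : Finset Ω), μ z) ≤ 1/2) := fun h =>
        hex ⟨{y}, singleton_nonempty y, h⟩
      rw [Finset.sum_singleton] at hx hy
      push_neg at hx hy
      have hle : μ x + μ y ≤ 1 := by
        have h1 : ∑ z ∈ ({x, y} : Finset Ω), μ z ≤ ∑ z, μ z :=
          Finset.sum_le_sum_of_subset_of_nonneg (subset_univ _)
            (fun z _ _ => (hμ0 z).le)
        rw [Finset.sum_pair hxy, hμ1] at h1
        exact h1
      linarith
    have hMC : minConductance μ P = 0 := by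
      rw [minConductance]
      convert Real.sInf_empty using 2
      rw [Set.eq_empty_iff_forall_notMem]
      rintro r ⟨A, hA1, hA2, _⟩
      exact hex ⟨A, hA1, hA2⟩
    have hSG : specGap μ P = 0 := by
      rw [specGap]
      convert Real.sInf_empty using 2
      rw [Set.eq_empty_iff_forall_notMem]
      rintro r ⟨f, hf, _⟩
      apply hf
      obtain ⟨z⟩ := (inferInstance : Nonempty Ω)
      have huniv : (univ : Finset Ω) = {z} := by
        ext w; simp [hsub w z]
      have hμz : μ z = 1 := by rw [← hμ1, huniv, Finset.sum_singleton]
      rw [varForm, huniv, Finset.sum_singleton, Finset.sum_singleton, hμz]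
      ring
    rw [hMC, hSG]; norm_num
  case pos =>
    obtain ⟨A₀, hA₀ne, hA₀le⟩ := hex
    set Φ : ℝ := minConductance μ P with hΦdef
    set Sc : Set ℝ := {r : ℝ | ∃ A : Finset Ω, A.Nonempty ∧ (∑ x ∈ A, μ x) ≤ 1 / 2 ∧
      r = conductance μ P A} with hScdef
    set Sg : Set ℝ := {r : ℝ | ∃ f : Ω → ℝ, varForm μ f ≠ 0 ∧
      r = dirichletForm μ P f / varForm μ f} with hSgdef
    have hΦeq : Φ = sInf Sc := rfl
    have hGeq : specGap μ P = sInf Sg := rfl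
    have hScne : Sc.Nonempty := ⟨conductance μ P A₀, A₀, hA₀ne, hA₀le, rfl⟩
    have hcond0 : ∀ A : Finset Ω, 0 ≤ conductance μ P A := by
      intro A
      unfold conductance
      exact div_nonneg (edgeFlow_nonneg μ P hP0 hμ0 A)
        (Finset.sum_nonneg fun x _ => (hμ0 x).le)
    have hScbdd : BddBelow Sc := by
      refine ⟨0, ?_⟩
      rintro r ⟨A, hA1, hA2, rfl⟩
      exact hcond0 A
    have hΦ0 : 0 ≤ Φ := by
      rw [hΦeq]
      apply le_csInf hScne
      rintro r ⟨A, hA1, hA2, rfl⟩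
      exact hcond0 A
    have hμA : ∀ A : Finset Ω, A.Nonempty → 0 < ∑ x ∈ A, μ x := by
      rintro A ⟨x, hx⟩
      exact Finset.sum_pos (fun y _ => hμ0 y) ⟨x, hx⟩
    have hΦle : ∀ A : Finset Ω, A.Nonempty → (∑ x ∈ A, μ x) ≤ 1/2 →
        Φ * ∑ x ∈ A, μ x ≤ edgeFlow μ P A := by
      intro A h1 h2
      have hmem : conductance μ P A ∈ Sc := ⟨A, h1, h2, rfl⟩
      have hle : Φ ≤ conductance μ P A := hΦeq ▸ csInf_le hScbdd hmem
      have ha := hμA A h1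
      calc Φ * ∑ x ∈ A, μ x
          ≤ conductance μ P A * ∑ x ∈ A, μ x :=
            mul_le_mul_of_nonneg_right hle ha.le
        _ = edgeFlow μ P A := by
            unfold conductance
            exact div_mul_cancel₀ _ ha.ne'
    have hSgbdd : BddBelow Sg := by
      refine ⟨0, ?_⟩
      rintro r ⟨f, hf, rfl⟩
      exact div_nonneg (dirichlet_nonneg μ P hP0 hμ0 f) (var_nonneg μ hμ0 f)
    -- upper bound
    have hupper : ∀ r ∈ Sc, specGap μ P ≤ 2 * r := by
      rintro r ⟨A, h1, h2, rfl⟩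
      have ha : 0 < ∑ x ∈ A, μ x := hμA A h1
      set a : ℝ := ∑ x ∈ A, μ x with hadef
      set f : Ω → ℝ := fun x => if x ∈ A then (1:ℝ) else 0 with hfdef
      have hV : varForm μ f = a * (1 - a) := var_indicator μ hμ1 A
      have hVne : varForm μ f ≠ 0 := by
        rw [hV]; nlinarith
      have hE : dirichletForm μ P f = edgeFlow μ P A := dirichlet_indicator μ P hrev A
      have hmem : dirichletForm μ P f / varForm μ f ∈ Sg := ⟨f, hVne, rfl⟩
      have h3 : specGap μ P ≤ dirichletForm μ P f / varForm μ f :=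
        hGeq ▸ csInf_le hSgbdd hmem
      have hQ : 0 ≤ edgeFlow μ P A := edgeFlow_nonneg μ P hP0 hμ0 A
      have h4 : dirichletForm μ P f / varForm μ f ≤ 2 * conductance μ P A := by
        rw [hV, hE]
        unfold conductance
        rw [div_le_iff₀ (by nlinarith)]
        have h5 : 2 * (edgeFlow μ P A / a) * (a * (1 - a))
            = 2 * edgeFlow μ P A * (1 - a) := by
          field_simp
        rw [h5]
        nlinarith
      linarith
    have hub : specGap μ P ≤ 2 * Φ := by
      have h6 : specGap μ P / 2 ≤ Φ := by
        rw [hΦeq]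
        exact le_csInf hScne (fun r hr => by linarith [hupper r hr])
      linarith
    -- lower bound
    have hSgne : Sg.Nonempty := by
      set f : Ω → ℝ := fun x => if x ∈ A₀ then (1:ℝ) else 0 with hfdef
      have ha : 0 < ∑ x ∈ A₀, μ x := hμA A₀ hA₀ne
      have hV : varForm μ f = (∑ x ∈ A₀, μ x) * (1 - ∑ x ∈ A₀, μ x) :=
        var_indicator μ hμ1 A₀
      have hVne : varForm μ f ≠ 0 := by rw [hV]; nlinarith
      exact ⟨dirichletForm μ P f / varForm μ f, f, hVne, rfl⟩
    have hlower : Φ ^ 2 / 2 ≤ specGap μ P := by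
      rw [hGeq]
      apply le_csInf hSgne
      rintro r ⟨f, hVne, rfl⟩
      have hVpos : 0 < varForm μ f :=
        lt_of_le_of_ne (var_nonneg μ hμ0 f) (Ne.symm hVne)
      obtain ⟨m, hm1, hm2⟩ := exists_median μ hμ0 hμ1 f
      set g : Ω → ℝ := fun x => max (f x - m) 0 with hgdef
      set h : Ω → ℝ := fun x => max (m - f x) 0 with hhdef
      have hg0 : ∀ x, 0 ≤ g x := fun x => le_max_right _ _
      have hh0 : ∀ x, 0 ≤ h x := fun x => le_max_right _ _
      have p1 : ∀ z, g z - h z = f z - m := by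
        intro z
        simp only [hgdef, hhdef]
        rcases le_total (f z) m with hz | hz
        · rw [max_eq_right (by linarith), max_eq_left (by linarith)]; ring
        · rw [max_eq_left (by linarith), max_eq_right (by linarith)]; ring
      have p2 : ∀ z, g z * h z = 0 := by
        intro z
        simp only [hgdef, hhdef]
        rcases le_total (f z) m with hz | hz
        · have e : (f z - m) ⊔ 0 = 0 := max_eq_right (by linarith)
          rw [e]; ring
        · have e : (m - f z) ⊔ 0 = 0 := max_eq_right (by linarith)
          rw [e]; ring
      have hgsupp : univ.filter (fun x => g x ≠ 0) = univ.filter (fun x => m < f x) := by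
        ext x
        simp only [mem_filter, mem_univ, true_and, hgdef]
        constructor
        · intro hx
          by_contra hle
          push_neg at hle
          exact hx (max_eq_right (by linarith))
        · intro hx hx2
          rw [max_eq_left (by linarith)] at hx2
          linarith
      have hhsupp : univ.filter (fun x => h x ≠ 0) = univ.filter (fun x => f x < m) := by
        ext x
        simp only [mem_filter, mem_univ, true_and, hhdef]
        constructor
        · intro hx
          by_contra hle
          push_neg at hle
          exact hx (max_eq_right (by linarith))
        · intro hx hx2
          rw [max_eq_left (by linarith)] at hx2
          linarith
      have hcg : Φ ^ 2 / 2 * ∑ x, μ x * g x ^ 2 ≤ dirichletForm μ P g :=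
        cheeger_one_sided μ P hP0 hP1 hμ0 hrev Φ hΦ0 hΦle g hg0
          (by rw [hgsupp]; exact hm1)
      have hch : Φ ^ 2 / 2 * ∑ x, μ x * h x ^ 2 ≤ dirichletForm μ P h :=
        cheeger_one_sided μ P hP0 hP1 hμ0 hrev Φ hΦ0 hΦle h hh0
          (by rw [hhsupp]; exact hm2)
      have hEsum : dirichletForm μ P g + dirichletForm μ P h ≤ dirichletForm μ P f := by
        unfold dirichletForm
        rw [← mul_add]
        apply mul_le_mul_of_nonneg_left _ (by norm_num)
        rw [← Finset.sum_add_distrib]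
        apply Finset.sum_le_sum
        intro x _
        rw [← Finset.sum_add_distrib]
        apply Finset.sum_le_sum
        intro y _
        have hμP := mul_nonneg (hμ0 x).le (hP0 x y)
        rw [← mul_add]
        apply mul_le_mul_of_nonneg_left _ hμP
        have e1 : f x - f y = (g x - g y) - (h x - h y) := by
          have q1 := p1 x; have q2 := p1 y; linarith
        rw [e1]
        nlinarith [p2 x, p2 y, mul_nonneg (hg0 x) (hh0 y),
          mul_nonneg (hg0 y) (hh0 x)]
      have hNsum : (∑ x, μ x * g x ^ 2) + (∑ x, μ x * h x ^ 2)
          = ∑ x, μ x * (f x - m) ^ 2 := by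
        rw [← Finset.sum_add_distrib]
        apply Finset.sum_congr rfl
        intro x _
        have e : g x ^ 2 + h x ^ 2 = (f x - m) ^ 2 := by
          have e1 : f x - m = g x - h x := (p1 x).symm
          rw [e1]
          linear_combination 2 * p2 x
        linear_combination μ x * e
      have expand : ∀ c : ℝ, ∑ x, μ x * (f x - c) ^ 2
          = (∑ x, μ x * f x ^ 2) - 2 * c * (∑ x, μ x * f x) + c ^ 2 := by
        intro c
        have e : ∀ x, μ x * (f x - c) ^ 2
            = μ x * f x ^ 2 - 2 * c * (μ x * f x) + c ^ 2 * μ x := fun x => by ring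
        rw [Finset.sum_congr rfl (fun x _ => e x)]
        rw [Finset.sum_add_distrib, Finset.sum_sub_distrib, ← Finset.mul_sum,
          ← Finset.mul_sum, hμ1]
        ring
      have hvar2 : varForm μ f ≤ ∑ x, μ x * (f x - m) ^ 2 := by
        rw [varForm, expand (∑ y, μ y * f y), expand m]
        nlinarith [sq_nonneg ((∑ x, μ x * f x) - m)]
      rw [le_div_iff₀ hVpos]
      calc Φ ^ 2 / 2 * varForm μ f
          ≤ Φ ^ 2 / 2 * ∑ x, μ x * (f x - m) ^ 2 :=
            mul_le_mul_of_nonneg_left hvar2 (by positivity)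
        _ = Φ ^ 2 / 2 * ((∑ x, μ x * g x ^ 2) + ∑ x, μ x * h x ^ 2) := by
            rw [hNsum]
        _ ≤ dirichletForm μ P g + dirichletForm μ P h := by
            rw [mul_add]; exact add_le_add hcg hch
        _ ≤ dirichletForm μ P f := hEsum
    exact ⟨hlower, hub⟩
end

section
/- Let P_FK = (1/|E|) Σ_{e∈E} P_e be the single-edge heat-bath (Glauber) dynamics for the random-cluster model on a finite graph with edge set E, and for a subset L ⊆ E of edges let P_MHB = (1/|E|)( Σ_{e∈L} P_e + Σ_{e∈E\L} P_{E\L} ), where P_B denotes the heat-bath update of the full block B ⊆ E. Then for every function f, ⟨f, P_MHB f⟩_π ≤ ⟨f, P_FK f⟩_π, and consequently gap(P_FK) ≤ gap(P_MHB). -/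
open Finset

variable {V : Type*} [DecidableEq V]

/-- Number of connected components of `(V, ω)` (isolated vertices included). -/
noncomputable def rcComps (V : Type*) [DecidableEq V] (ω : Finset (Sym2 V)) : ℕ :=
  Nat.card (Quotient (Relation.EqvGen.setoid (fun x y : V => s(x, y) ∈ ω)))

/-- Unnormalized random-cluster weight. -/
noncomputable def rcWeight (p q : ℝ) (E : Finset (Sym2 V)) (ω : Finset (Sym2 V)) : ℝ :=
  p ^ ω.card * (1 - p) ^ (E \ ω).card * q ^ rcComps V ω

/-- Configurations on the edge set `E`. -/
abbrev Config (E : Finset (Sym2 V)) := {S : Finset (Sym2 V) // S ∈ E.powerset}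

/-- The normalized random-cluster probability of a configuration. -/
noncomputable def rcProb (p q : ℝ) (E : Finset (Sym2 V)) (ω : Config E) : ℝ :=
  rcWeight p q E ω.1 / ∑ σ : Config E, rcWeight p q E σ.1

/-- Heat-bath update of the block of edges `B`: resample the configuration on
`B` from the random-cluster measure conditioned on the configuration off `B`. -/
noncomputable def heatBath (p q : ℝ) (E B : Finset (Sym2 V)) :
    Matrix (Config E) (Config E) ℝ := fun ω ω' =>
  if ω.1 \ B = ω'.1 \ B then
    rcWeight p q E ω'.1 /
      ∑ σ : Config E, if σ.1 \ B = ω.1 \ B then rcWeight p q E σ.1 else 0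
  else 0

/-- The single-edge heat-bath (FK/Glauber) dynamics. -/
noncomputable def Pfk (p q : ℝ) (E : Finset (Sym2 V)) : Matrix (Config E) (Config E) ℝ :=
  (E.card : ℝ)⁻¹ • ∑ e ∈ E, heatBath p q E {e}

/-- The modified heat-bath dynamics: single-edge updates on `L` and a full
block update of `E \ L` for each edge of `E \ L`. -/
noncomputable def Pmhb (p q : ℝ) (E L : Finset (Sym2 V)) :
    Matrix (Config E) (Config E) ℝ :=
  (E.card : ℝ)⁻¹ •
    (∑ e ∈ L, heatBath p q E {e} + ((E \ L).card : ℝ) • heatBath p q E (E \ L))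

/-- Inner product on `L²(π)`. -/
noncomputable def innerP (p q : ℝ) (E : Finset (Sym2 V)) (f g : Config E → ℝ) : ℝ :=
  ∑ ω : Config E, rcProb p q E ω * f ω * g ω

/-- Variance under `π`. -/
noncomputable def varP (p q : ℝ) (E : Finset (Sym2 V)) (f : Config E → ℝ) : ℝ :=
  ∑ ω : Config E, rcProb p q E ω * (f ω - ∑ σ : Config E, rcProb p q E σ * f σ) ^ 2

/-- Spectral gap of a reversible chain `P`, via the variational formula
`gap = inf ⟨f, (I-P) f⟩_π / Var_π(f)`. -/
noncomputable def gapP (p q : ℝ) (E : Finset (Sym2 V)) (P : Matrix (Config E) (Config E) ℝ) : ℝ :=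
  sInf {r : ℝ | ∃ f : Config E → ℝ, varP p q E f ≠ 0 ∧
    r = innerP p q E f (fun ω => f ω - P.mulVec f ω) / varP p q E f}

section aux
variable (p q : ℝ) (E : Finset (Sym2 V))

noncomputable def Wc (B : Finset (Sym2 V)) (ω : Config E) : ℝ :=
  ∑ σ : Config E, if σ.1 \ B = ω.1 \ B then rcWeight p q E σ.1 else 0

noncomputable def Sc (B : Finset (Sym2 V)) (f : Config E → ℝ) (ω : Config E) : ℝ :=
  ∑ σ : Config E, if σ.1 \ B = ω.1 \ B then rcWeight p q E σ.1 * f σ else 0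

variable {p q}

lemma wgt_pos (hp : p ∈ Set.Ioo (0:ℝ) 1) (hq : 0 < q) (σ : Finset (Sym2 V)) :
    0 < rcWeight p q E σ := by
  have h1 : (0:ℝ) < 1 - p := by linarith [hp.2]
  exact mul_pos (mul_pos (pow_pos hp.1 _) (pow_pos h1 _)) (pow_pos hq _)

variable (hp : p ∈ Set.Ioo (0:ℝ) 1) (hq : 0 < q)
include hp hq

lemma Wc_pos (B : Finset (Sym2 V)) (ω : Config E) : 0 < Wc p q E B ω := by
  have hnn : ∀ σ ∈ (univ : Finset (Config E)),
      0 ≤ (if σ.1 \ B = ω.1 \ B then rcWeight p q E σ.1 else 0) := by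
    intro σ _; split
    · exact (wgt_pos E hp hq _).le
    · exact le_rfl
  have hmem : (if ω.1 \ B = ω.1 \ B then rcWeight p q E ω.1 else 0) ≤ Wc p q E B ω :=
    Finset.single_le_sum hnn (mem_univ ω)
  simpa using lt_of_lt_of_le (by simpa using wgt_pos E hp hq ω.1) hmem

omit hp hq

lemma Wc_class {B : Finset (Sym2 V)} {ω σ : Config E} (h : σ.1 \ B = ω.1 \ B) :
    Wc p q E B σ = Wc p q E B ω := by
  unfold Wc
  refine Finset.sum_congr rfl fun τ _ => ?_
  rw [h]

lemma Sc_class {B : Finset (Sym2 V)} (f : Config E → ℝ) {ω σ : Config E}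
    (h : σ.1 \ B = ω.1 \ B) : Sc p q E B f σ = Sc p q E B f ω := by
  unfold Sc
  refine Finset.sum_congr rfl fun τ _ => ?_
  rw [h]

lemma heatBath_mulVec (B : Finset (Sym2 V)) (f : Config E → ℝ) (ω : Config E) :
    (heatBath p q E B).mulVec f ω = Sc p q E B f ω / Wc p q E B ω := by
  unfold heatBath Sc Wc Matrix.mulVec dotProduct
  rw [Finset.sum_div]
  refine Finset.sum_congr rfl fun σ _ => ?_
  dsimp only
  by_cases h : σ.1 \ B = ω.1 \ B
  · rw [if_pos h.symm, if_pos h, div_mul_eq_mul_div]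
  · rw [if_neg (fun hh => h hh.symm), if_neg h, zero_mul, zero_div]

include hp hq

/-- Projection identity: for `h` measurable w.r.t. the configuration off `B`. -/
lemma proj_identity (B : Finset (Sym2 V)) (f h : Config E → ℝ)
    (hmeas : ∀ ω σ : Config E, σ.1 \ B = ω.1 \ B → h σ = h ω) :
    ∑ ω : Config E, rcWeight p q E ω.1 * f ω * h ω =
    ∑ ω : Config E, rcWeight p q E ω.1 * (Sc p q E B f ω / Wc p q E B ω) * h ω := by
  symm
  have step1 : ∀ ω : Config E,
      rcWeight p q E ω.1 * (Sc p q E B f ω / Wc p q E B ω) * h ω =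
      ∑ σ : Config E, (if σ.1 \ B = ω.1 \ B then
        rcWeight p q E σ.1 * f σ * (rcWeight p q E ω.1 * h ω / Wc p q E B ω) else 0) := by
    intro ω
    have : rcWeight p q E ω.1 * (Sc p q E B f ω / Wc p q E B ω) * h ω =
        Sc p q E B f ω * (rcWeight p q E ω.1 * h ω / Wc p q E B ω) := by ring
    rw [this]
    unfold Sc
    rw [Finset.sum_mul]
    exact Finset.sum_congr rfl fun σ _ => by rw [ite_mul, zero_mul]
  calc ∑ ω : Config E, rcWeight p q E ω.1 * (Sc p q E B f ω / Wc p q E B ω) * h ω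
      = ∑ ω : Config E, ∑ σ : Config E, (if σ.1 \ B = ω.1 \ B then
          rcWeight p q E σ.1 * f σ * (rcWeight p q E ω.1 * h ω / Wc p q E B ω) else 0) :=
        Finset.sum_congr rfl fun ω _ => step1 ω
    _ = ∑ σ : Config E, ∑ ω : Config E, (if σ.1 \ B = ω.1 \ B then
          rcWeight p q E σ.1 * f σ * (rcWeight p q E ω.1 * h ω / Wc p q E B ω) else 0) :=
        Finset.sum_comm
    _ = ∑ σ : Config E, rcWeight p q E σ.1 * f σ * h σ := by
        refine Finset.sum_congr rfl fun σ _ => ?_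
        have : ∀ ω : Config E, (if σ.1 \ B = ω.1 \ B then
            rcWeight p q E σ.1 * f σ * (rcWeight p q E ω.1 * h ω / Wc p q E B ω) else 0) =
            (rcWeight p q E σ.1 * f σ * h σ / Wc p q E B σ) *
              (if σ.1 \ B = ω.1 \ B then rcWeight p q E ω.1 else 0) := by
          intro ω
          by_cases hc : σ.1 \ B = ω.1 \ B
          · rw [if_pos hc, if_pos hc, hmeas ω σ hc, Wc_class E hc]
            ring
          · rw [if_neg hc, if_neg hc, mul_zero]
        rw [Finset.sum_congr rfl fun ω _ => this ω, ← Finset.mul_sum]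
        have hW : (∑ ω : Config E, if σ.1 \ B = ω.1 \ B then rcWeight p q E ω.1 else 0) =
            Wc p q E B σ := by
          unfold Wc
          exact Finset.sum_congr rfl fun τ _ => by simp only [eq_comm]
        rw [hW, div_mul_cancel₀]
        exact (Wc_pos E hp hq B σ).ne'

end aux

section more
variable {V : Type*} [DecidableEq V] {p q : ℝ} (E : Finset (Sym2 V))
variable (hp : p ∈ Set.Ioo (0:ℝ) 1) (hq : 0 < q)

lemma sdiff_mono_class {B B' : Finset (Sym2 V)} (hBB' : B ⊆ B') {σ τ : Finset (Sym2 V)}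
    (h : σ \ B = τ \ B) : σ \ B' = τ \ B' := by
  ext x
  have hx := Finset.ext_iff.mp h x
  simp only [Finset.mem_sdiff] at hx ⊢
  constructor
  · rintro ⟨hs, hb⟩; exact ⟨(hx.mp ⟨hs, fun hB => hb (hBB' hB)⟩).1, hb⟩
  · rintro ⟨hs, hb⟩; exact ⟨(hx.mpr ⟨hs, fun hB => hb (hBB' hB)⟩).1, hb⟩

include hp hq

lemma tower {B B' : Finset (Sym2 V)} (hBB' : B ⊆ B') (f : Config E → ℝ) (ω : Config E) :
    Sc p q E B' (fun σ => Sc p q E B f σ / Wc p q E B σ) ω = Sc p q E B' f ω := by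
  unfold Sc
  calc (∑ σ : Config E, if σ.1 \ B' = ω.1 \ B' then rcWeight p q E σ.1 *
          ((∑ τ : Config E, if τ.1 \ B = σ.1 \ B then rcWeight p q E τ.1 * f τ else 0) /
            Wc p q E B σ) else 0)
      = ∑ σ : Config E, ∑ τ : Config E, (if σ.1 \ B' = ω.1 \ B' then
          (if τ.1 \ B = σ.1 \ B then
            rcWeight p q E τ.1 * f τ * (rcWeight p q E σ.1 / Wc p q E B σ) else 0) else 0) := by
        refine Finset.sum_congr rfl fun σ _ => ?_
        by_cases hc : σ.1 \ B' = ω.1 \ B'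
        · simp only [if_pos hc]
          rw [show rcWeight p q E σ.1 *
              ((∑ τ : Config E, if τ.1 \ B = σ.1 \ B then rcWeight p q E τ.1 * f τ else 0) /
                Wc p q E B σ) =
              ∑ τ : Config E, (if τ.1 \ B = σ.1 \ B then rcWeight p q E τ.1 * f τ else 0) *
                (rcWeight p q E σ.1 / Wc p q E B σ) from by rw [← Finset.sum_mul]; ring]
          exact Finset.sum_congr rfl fun τ _ => by rw [ite_mul, zero_mul]
        · simp only [if_neg hc, Finset.sum_const_zero]
    _ = ∑ τ : Config E, ∑ σ : Config E, (if σ.1 \ B' = ω.1 \ B' then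
          (if τ.1 \ B = σ.1 \ B then
            rcWeight p q E τ.1 * f τ * (rcWeight p q E σ.1 / Wc p q E B σ) else 0) else 0) :=
        Finset.sum_comm
    _ = ∑ τ : Config E, if τ.1 \ B' = ω.1 \ B' then rcWeight p q E τ.1 * f τ else 0 := by
        refine Finset.sum_congr rfl fun τ _ => ?_
        have key : ∀ σ : Config E, (if σ.1 \ B' = ω.1 \ B' then
            (if τ.1 \ B = σ.1 \ B then
              rcWeight p q E τ.1 * f τ * (rcWeight p q E σ.1 / Wc p q E B σ) else 0) else 0) =
            (rcWeight p q E τ.1 * f τ / Wc p q E B τ) *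
              (if τ.1 \ B' = ω.1 \ B' then (if σ.1 \ B = τ.1 \ B then rcWeight p q E σ.1 else 0)
                else 0) := by
          intro σ
          by_cases h1 : τ.1 \ B = σ.1 \ B
          · have h2 : τ.1 \ B' = σ.1 \ B' := sdiff_mono_class hBB' h1
            have hW : Wc p q E B τ = Wc p q E B σ := Wc_class E h1
            rw [← h2, hW, if_pos h1, if_pos h1.symm]
            by_cases h3 : τ.1 \ B' = ω.1 \ B'
            · rw [if_pos h3, if_pos h3]; ring
            · rw [if_neg h3, if_neg h3, mul_zero]
          · rw [if_neg h1, ite_self,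
              if_neg (show ¬ σ.1 \ B = τ.1 \ B from fun hh => h1 hh.symm), ite_self, mul_zero]
        rw [Finset.sum_congr rfl fun σ _ => key σ, ← Finset.mul_sum]
        by_cases h3 : τ.1 \ B' = ω.1 \ B'
        · simp only [if_pos h3]
          have hWc : (∑ σ : Config E, if σ.1 \ B = τ.1 \ B then rcWeight p q E σ.1 else 0) =
              Wc p q E B τ := rfl
          rw [hWc, div_mul_cancel₀]
          exact (Wc_pos E hp hq B τ).ne'
        · simp only [if_neg h3, Finset.sum_const_zero, mul_zero]

omit hp hq

lemma sc_sq_le (B : Finset (Sym2 V)) (f : Config E → ℝ) (ω : Config E)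
    (hp : p ∈ Set.Ioo (0:ℝ) 1) (hq : 0 < q) :
    (Sc p q E B f ω) ^ 2 ≤ Wc p q E B ω * Sc p q E B (fun σ => f σ * f σ) ω := by
  unfold Sc Wc
  refine Finset.sum_sq_le_sum_mul_sum_of_sq_eq_mul univ ?_ ?_ ?_
  · intro σ _; split
    · exact (wgt_pos E hp hq _).le
    · exact le_rfl
  · intro σ _; split
    · exact mul_nonneg (wgt_pos E hp hq _).le (mul_self_nonneg _)
    · exact le_rfl
  · intro σ _
    by_cases h : σ.1 \ B = ω.1 \ B
    · rw [if_pos h, if_pos h, if_pos h]; ring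
    · rw [if_neg h, if_neg h, if_neg h]; ring

end more

section main
variable {V : Type*} [DecidableEq V] {p q : ℝ} (E : Finset (Sym2 V))
variable (hp : p ∈ Set.Ioo (0:ℝ) 1) (hq : 0 < q)
include hp hq

lemma dirichlet_mono {B B' : Finset (Sym2 V)} (hBB' : B ⊆ B') (f : Config E → ℝ) :
    ∑ ω : Config E, rcWeight p q E ω.1 * f ω * (Sc p q E B' f ω / Wc p q E B' ω) ≤
    ∑ ω : Config E, rcWeight p q E ω.1 * f ω * (Sc p q E B f ω / Wc p q E B ω) := by
  set g : Config E → ℝ := fun ω => Sc p q E B f ω / Wc p q E B ω with hg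
  set h' : Config E → ℝ := fun ω => Sc p q E B' f ω / Wc p q E B' ω with hh'
  have hgm : ∀ ω σ : Config E, σ.1 \ B = ω.1 \ B → g σ = g ω := fun ω σ hc => by
    simp only [hg]; rw [Sc_class E f hc, Wc_class E hc]
  have hh'm : ∀ ω σ : Config E, σ.1 \ B' = ω.1 \ B' → h' σ = h' ω := fun ω σ hc => by
    simp only [hh']; rw [Sc_class E f hc, Wc_class E hc]
  have L1 : ∑ ω : Config E, rcWeight p q E ω.1 * f ω * h' ω =
      ∑ ω : Config E, rcWeight p q E ω.1 * h' ω * h' ω := by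
    have := proj_identity E hp hq B' f h' hh'm
    exact this
  have L5 : ∑ ω : Config E, rcWeight p q E ω.1 * f ω * g ω =
      ∑ ω : Config E, rcWeight p q E ω.1 * g ω * g ω := by
    have := proj_identity E hp hq B f g hgm
    exact this
  rw [show (∑ ω : Config E, rcWeight p q E ω.1 * f ω * h' ω) = _ from L1,
      show (∑ ω : Config E, rcWeight p q E ω.1 * f ω * g ω) = _ from L5]
  have L4 : ∑ ω : Config E, rcWeight p q E ω.1 * g ω * g ω =
      ∑ ω : Config E, rcWeight p q E ω.1 *
        (Sc p q E B' (fun σ => g σ * g σ) ω / Wc p q E B' ω) := by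
    have := proj_identity E hp hq B' (fun σ => g σ * g σ) (fun _ => 1)
      (fun _ _ _ => rfl)
    calc ∑ ω : Config E, rcWeight p q E ω.1 * g ω * g ω
        = ∑ ω : Config E, rcWeight p q E ω.1 * (g ω * g ω) * 1 :=
          Finset.sum_congr rfl fun ω _ => by ring
      _ = ∑ ω : Config E, rcWeight p q E ω.1 *
            (Sc p q E B' (fun σ => g σ * g σ) ω / Wc p q E B' ω) * 1 := this
      _ = ∑ ω : Config E, rcWeight p q E ω.1 *
            (Sc p q E B' (fun σ => g σ * g σ) ω / Wc p q E B' ω) :=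
          Finset.sum_congr rfl fun ω _ => by ring
  rw [L4]
  refine Finset.sum_le_sum fun ω _ => ?_
  have hWpos := Wc_pos E hp hq B' ω
  have htow : Sc p q E B' f ω = Sc p q E B' g ω := (tower E hp hq hBB' f ω).symm
  have hcs : (Sc p q E B' g ω) ^ 2 ≤
      Wc p q E B' ω * Sc p q E B' (fun σ => g σ * g σ) ω := sc_sq_le E B' g ω hp hq
  have key : h' ω * h' ω ≤ Sc p q E B' (fun σ => g σ * g σ) ω / Wc p q E B' ω := by
    have : h' ω = Sc p q E B' g ω / Wc p q E B' ω := by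
      simp only [hh', htow]
    rw [this, div_mul_div_comm, div_le_div_iff₀ (by positivity) hWpos]
    calc Sc p q E B' g ω * Sc p q E B' g ω * Wc p q E B' ω
        = (Sc p q E B' g ω) ^ 2 * Wc p q E B' ω := by ring
      _ ≤ (Wc p q E B' ω * Sc p q E B' (fun σ => g σ * g σ) ω) * Wc p q E B' ω :=
          mul_le_mul_of_nonneg_right hcs hWpos.le
      _ = Sc p q E B' (fun σ => g σ * g σ) ω * (Wc p q E B' ω * Wc p q E B' ω) := by ring
  calc rcWeight p q E ω.1 * h' ω * h' ω
      = rcWeight p q E ω.1 * (h' ω * h' ω) := by ring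
    _ ≤ rcWeight p q E ω.1 * (Sc p q E B' (fun σ => g σ * g σ) ω / Wc p q E B' ω) :=
        mul_le_mul_of_nonneg_left key (wgt_pos E hp hq _).le

end main

section bridge
variable {V : Type*} [DecidableEq V] {p q : ℝ} (E : Finset (Sym2 V))
variable (hp : p ∈ Set.Ioo (0:ℝ) 1) (hq : 0 < q)

lemma Z_pos (hp : p ∈ Set.Ioo (0:ℝ) 1) (hq : 0 < q) :
    0 < ∑ σ : Config E, rcWeight p q E σ.1 := by
  have : (⟨∅, Finset.mem_powerset.mpr (Finset.empty_subset E)⟩ : Config E) ∈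
      (univ : Finset (Config E)) := mem_univ _
  exact Finset.sum_pos' (fun σ _ => (wgt_pos E hp hq _).le)
    ⟨_, this, wgt_pos E hp hq _⟩

include hp hq

lemma rcProb_pos (ω : Config E) : 0 < rcProb p q E ω :=
  div_pos (wgt_pos E hp hq _) (Z_pos E hp hq)

omit hp hq

lemma innerP_eq (f g : Config E → ℝ) :
    innerP p q E f g =
      (∑ ω : Config E, rcWeight p q E ω.1 * f ω * g ω) / ∑ σ : Config E, rcWeight p q E σ.1 := by
  unfold innerP rcProb
  rw [Finset.sum_div]
  exact Finset.sum_congr rfl fun ω _ => by ring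

/-- `Sc ∅ f / Wc ∅ = f`. -/
lemma sc_empty (hp : p ∈ Set.Ioo (0:ℝ) 1) (hq : 0 < q) (f : Config E → ℝ) (ω : Config E) :
    Sc p q E ∅ f ω / Wc p q E ∅ ω = f ω := by
  have hcond : ∀ σ : Config E, (σ.1 \ (∅ : Finset (Sym2 V)) = ω.1 \ ∅) ↔ σ = ω := by
    intro σ
    simp only [Finset.sdiff_empty]
    exact ⟨fun h => Subtype.ext h, fun h => by rw [h]⟩
  have hS : Sc p q E ∅ f ω = rcWeight p q E ω.1 * f ω := by
    unfold Sc
    rw [Finset.sum_congr rfl fun σ _ => by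
      rw [show (if σ.1 \ (∅ : Finset (Sym2 V)) = ω.1 \ ∅ then rcWeight p q E σ.1 * f σ else 0) =
        (if σ = ω then rcWeight p q E σ.1 * f σ else 0) from by
          by_cases h : σ = ω
          · rw [if_pos ((hcond σ).mpr h), if_pos h]
          · rw [if_neg (fun hh => h ((hcond σ).mp hh)), if_neg h]]]
    rw [Finset.sum_ite_eq' univ ω fun σ => rcWeight p q E σ.1 * f σ, if_pos (mem_univ ω)]
  have hW : Wc p q E ∅ ω = rcWeight p q E ω.1 := by
    unfold Wc
    rw [Finset.sum_congr rfl fun σ _ => by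
      rw [show (if σ.1 \ (∅ : Finset (Sym2 V)) = ω.1 \ ∅ then rcWeight p q E σ.1 else 0) =
        (if σ = ω then rcWeight p q E σ.1 else 0) from by
          by_cases h : σ = ω
          · rw [if_pos ((hcond σ).mpr h), if_pos h]
          · rw [if_neg (fun hh => h ((hcond σ).mp hh)), if_neg h]]]
    rw [Finset.sum_ite_eq' univ ω fun σ => rcWeight p q E σ.1, if_pos (mem_univ ω)]
  rw [hS, hW]
  exact mul_div_cancel_left₀ _ (wgt_pos E hp hq ω.1).ne'

/-- Dirichlet comparison at the level of `innerP` and `heatBath`. -/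
lemma inner_heatBath_mono (hp : p ∈ Set.Ioo (0:ℝ) 1) (hq : 0 < q)
    {B B' : Finset (Sym2 V)} (hBB' : B ⊆ B') (f : Config E → ℝ) :
    innerP p q E f ((heatBath p q E B').mulVec f) ≤
      innerP p q E f ((heatBath p q E B).mulVec f) := by
  rw [innerP_eq, innerP_eq]
  rw [div_le_div_iff_of_pos_right (Z_pos E hp hq)]
  calc ∑ ω : Config E, rcWeight p q E ω.1 * f ω * (heatBath p q E B').mulVec f ω
      = ∑ ω : Config E, rcWeight p q E ω.1 * f ω * (Sc p q E B' f ω / Wc p q E B' ω) :=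
        Finset.sum_congr rfl fun ω _ => by rw [heatBath_mulVec]
    _ ≤ ∑ ω : Config E, rcWeight p q E ω.1 * f ω * (Sc p q E B f ω / Wc p q E B ω) :=
        dirichlet_mono E hp hq hBB' f
    _ = ∑ ω : Config E, rcWeight p q E ω.1 * f ω * (heatBath p q E B).mulVec f ω :=
        Finset.sum_congr rfl fun ω _ => by rw [heatBath_mulVec]

lemma inner_heatBath_le_self (hp : p ∈ Set.Ioo (0:ℝ) 1) (hq : 0 < q)
    (B : Finset (Sym2 V)) (f : Config E → ℝ) :
    innerP p q E f ((heatBath p q E B).mulVec f) ≤ innerP p q E f f := by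
  rw [innerP_eq, innerP_eq]
  rw [div_le_div_iff_of_pos_right (Z_pos E hp hq)]
  calc ∑ ω : Config E, rcWeight p q E ω.1 * f ω * (heatBath p q E B).mulVec f ω
      = ∑ ω : Config E, rcWeight p q E ω.1 * f ω * (Sc p q E B f ω / Wc p q E B ω) :=
        Finset.sum_congr rfl fun ω _ => by rw [heatBath_mulVec]
    _ ≤ ∑ ω : Config E, rcWeight p q E ω.1 * f ω * (Sc p q E ∅ f ω / Wc p q E ∅ ω) :=
        dirichlet_mono E hp hq (Finset.empty_subset B) f
    _ = ∑ ω : Config E, rcWeight p q E ω.1 * f ω * f ω :=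
        Finset.sum_congr rfl fun ω _ => by rw [sc_empty E hp hq]

end bridge

section assemble
variable {V : Type*} [DecidableEq V] {p q : ℝ} (E : Finset (Sym2 V))

lemma innerP_sum_right {ι : Type*} (s : Finset ι) (g : ι → Config E → ℝ) (f : Config E → ℝ) :
    innerP p q E f (fun ω => ∑ e ∈ s, g e ω) = ∑ e ∈ s, innerP p q E f (g e) := by
  unfold innerP
  simp_rw [Finset.mul_sum]
  exact Finset.sum_comm

lemma innerP_smul_right (c : ℝ) (f g : Config E → ℝ) :
    innerP p q E f (fun ω => c * g ω) = c * innerP p q E f g := by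
  unfold innerP
  rw [Finset.mul_sum]
  exact Finset.sum_congr rfl fun ω _ => by ring

lemma innerP_add_right (f g h : Config E → ℝ) :
    innerP p q E f (fun ω => g ω + h ω) = innerP p q E f g + innerP p q E f h := by
  unfold innerP
  rw [← Finset.sum_add_distrib]
  exact Finset.sum_congr rfl fun ω _ => by ring

lemma innerP_sub_right (f g h : Config E → ℝ) :
    innerP p q E f (fun ω => g ω - h ω) = innerP p q E f g - innerP p q E f h := by
  unfold innerP
  rw [← Finset.sum_sub_distrib]
  exact Finset.sum_congr rfl fun ω _ => by ring

lemma mulVec_sum {ι : Type*} (s : Finset ι) (M : ι → Matrix (Config E) (Config E) ℝ)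
    (v : Config E → ℝ) (ω : Config E) :
    (∑ e ∈ s, M e).mulVec v ω = ∑ e ∈ s, (M e).mulVec v ω := by
  unfold Matrix.mulVec dotProduct
  simp only [Matrix.sum_apply, Finset.sum_mul]
  exact Finset.sum_comm

lemma Pfk_mulVec (f : Config E → ℝ) :
    (Pfk p q E).mulVec f = fun ω =>
      (E.card : ℝ)⁻¹ * ∑ e ∈ E, (heatBath p q E {e}).mulVec f ω := by
  funext ω
  unfold Pfk
  rw [Matrix.smul_mulVec]
  simp only [Pi.smul_apply, smul_eq_mul]
  rw [mulVec_sum]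

lemma Pmhb_mulVec (L : Finset (Sym2 V)) (f : Config E → ℝ) :
    (Pmhb p q E L).mulVec f = fun ω =>
      (E.card : ℝ)⁻¹ * ((∑ e ∈ L, (heatBath p q E {e}).mulVec f ω) +
        ((E \ L).card : ℝ) * (heatBath p q E (E \ L)).mulVec f ω) := by
  funext ω
  unfold Pmhb
  rw [Matrix.smul_mulVec]
  simp only [Pi.smul_apply, smul_eq_mul]
  rw [Matrix.add_mulVec, Matrix.smul_mulVec]
  simp only [Pi.add_apply, Pi.smul_apply, smul_eq_mul]
  rw [mulVec_sum]

variable (hp : p ∈ Set.Ioo (0:ℝ) 1) (hq : 0 < q)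
include hp hq

lemma part1 (L : Finset (Sym2 V)) (hL : L ⊆ E) (f : Config E → ℝ) :
    innerP p q E f ((Pmhb p q E L).mulVec f) ≤ innerP p q E f ((Pfk p q E).mulVec f) := by
  rw [Pfk_mulVec, Pmhb_mulVec]
  rw [show (fun ω => (E.card : ℝ)⁻¹ * ((∑ e ∈ L, (heatBath p q E {e}).mulVec f ω) +
        ((E \ L).card : ℝ) * (heatBath p q E (E \ L)).mulVec f ω)) =
      (fun ω => (E.card : ℝ)⁻¹ * (((fun ω' => ∑ e ∈ L, (heatBath p q E {e}).mulVec f ω') ω) +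
        ((fun ω' => ((E \ L).card : ℝ) * (heatBath p q E (E \ L)).mulVec f ω') ω))) from rfl]
  rw [innerP_smul_right, innerP_smul_right, innerP_add_right, innerP_sum_right,
    innerP_smul_right, innerP_sum_right]
  apply mul_le_mul_of_nonneg_left ?_ (by positivity)
  have hsplit : ∑ e ∈ E, innerP p q E f ((heatBath p q E {e}).mulVec f) =
      (∑ e ∈ E \ L, innerP p q E f ((heatBath p q E {e}).mulVec f)) +
      ∑ e ∈ L, innerP p q E f ((heatBath p q E {e}).mulVec f) :=
    (Finset.sum_sdiff hL).symm
  rw [hsplit, add_comm (∑ e ∈ L, innerP p q E f ((heatBath p q E {e}).mulVec f))]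
  apply add_le_add_left
  have hconst : ((E \ L).card : ℝ) * innerP p q E f ((heatBath p q E (E \ L)).mulVec f) =
      ∑ _e ∈ E \ L, innerP p q E f ((heatBath p q E (E \ L)).mulVec f) := by
    rw [Finset.sum_const, nsmul_eq_mul]
  rw [hconst]
  refine Finset.sum_le_sum fun e he => ?_
  exact inner_heatBath_mono E hp hq (Finset.singleton_subset_iff.mpr he) f

lemma pfk_le_self (hE : E.Nonempty) (f : Config E → ℝ) :
    innerP p q E f ((Pfk p q E).mulVec f) ≤ innerP p q E f f := by
  rw [Pfk_mulVec, innerP_smul_right, innerP_sum_right]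
  have hcard : (0:ℝ) < E.card := by
    exact_mod_cast Finset.card_pos.mpr hE
  have hsum : ∑ e ∈ E, innerP p q E f ((heatBath p q E {e}).mulVec f) ≤
      (E.card : ℝ) * innerP p q E f f := by
    calc ∑ e ∈ E, innerP p q E f ((heatBath p q E {e}).mulVec f)
        ≤ ∑ _e ∈ E, innerP p q E f f :=
          Finset.sum_le_sum fun e _ => inner_heatBath_le_self E hp hq {e} f
      _ = (E.card : ℝ) * innerP p q E f f := by rw [Finset.sum_const, nsmul_eq_mul]
  calc (E.card : ℝ)⁻¹ * ∑ e ∈ E, innerP p q E f ((heatBath p q E {e}).mulVec f)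
      ≤ (E.card : ℝ)⁻¹ * ((E.card : ℝ) * innerP p q E f f) :=
        mul_le_mul_of_nonneg_left hsum (by positivity)
    _ = innerP p q E f f := by
        rw [← mul_assoc, inv_mul_cancel₀ hcard.ne', one_mul]

end assemble

section gap
variable {V : Type*} [DecidableEq V] {p q : ℝ} (E : Finset (Sym2 V))
variable (hp : p ∈ Set.Ioo (0:ℝ) 1) (hq : 0 < q)
include hp hq

lemma varP_pos_of_ne (f : Config E → ℝ) (hv : varP p q E f ≠ 0) : 0 < varP p q E f := by
  rcases (Finset.sum_nonneg fun ω _ =>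
    mul_nonneg (rcProb_pos E hp hq ω).le (sq_nonneg _)).lt_or_eq with h | h
  · exact h
  · exact absurd h.symm hv

lemma exists_var_ne (hE : E.Nonempty) : ∃ f : Config E → ℝ, varP p q E f ≠ 0 := by
  classical
  set ω₀ : Config E := ⟨∅, Finset.mem_powerset.mpr (Finset.empty_subset E)⟩ with hω₀
  set ω₁ : Config E := ⟨E, Finset.mem_powerset.mpr (Finset.Subset.refl E)⟩ with hω₁
  have hne : ω₀ ≠ ω₁ := by
    intro h
    have : (∅ : Finset (Sym2 V)) = E := congrArg Subtype.val h
    exact hE.ne_empty this.symm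
  refine ⟨fun ω => if ω = ω₀ then 1 else 0, ?_⟩
  set f : Config E → ℝ := fun ω => if ω = ω₀ then 1 else 0 with hf
  set m : ℝ := ∑ σ : Config E, rcProb p q E σ * f σ with hm
  have hterm : ∀ ω : Config E, 0 ≤ rcProb p q E ω * (f ω - m) ^ 2 := fun ω =>
    mul_nonneg (rcProb_pos E hp hq ω).le (sq_nonneg _)
  have hpair : rcProb p q E ω₀ * (f ω₀ - m) ^ 2 + rcProb p q E ω₁ * (f ω₁ - m) ^ 2 ≤
      varP p q E f := by
    have hsub : ({ω₀, ω₁} : Finset (Config E)) ⊆ univ := Finset.subset_univ _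
    have := Finset.sum_le_sum_of_subset_of_nonneg hsub
      (fun ω _ _ => hterm ω)
    rwa [Finset.sum_pair hne] at this
  have hf0 : f ω₀ = 1 := if_pos rfl
  have hf1 : f ω₁ = 0 := if_neg (fun h => hne h.symm)
  have hpos : 0 < rcProb p q E ω₀ * (f ω₀ - m) ^ 2 + rcProb p q E ω₁ * (f ω₁ - m) ^ 2 := by
    rw [hf0, hf1]
    by_cases hm1 : m = 1
    · apply add_pos_of_nonneg_of_pos
        (mul_nonneg (rcProb_pos E hp hq ω₀).le (sq_nonneg _))
      have h01 : (0 - m) ^ 2 = 1 := by rw [hm1]; norm_num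
      rw [h01, mul_one]
      exact rcProb_pos E hp hq ω₁
    · apply add_pos_of_pos_of_nonneg
      · apply mul_pos (rcProb_pos E hp hq ω₀)
        exact sq_pos_of_ne_zero (fun h => hm1 (by linarith))
      · exact mul_nonneg (rcProb_pos E hp hq ω₁).le (sq_nonneg _)
  exact (lt_of_lt_of_le hpos hpair).ne'

end gap

/-- `⟨f, P_MHB f⟩_π ≤ ⟨f, P_FK f⟩_π` for all `f`, and
consequently `gap(P_FK) ≤ gap(P_MHB)`. -/
theorem statement10 {V : Type*} [DecidableEq V]
    (p q : ℝ) (hp : p ∈ Set.Ioo (0 : ℝ) 1) (hq : 0 < q)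
    (E L : Finset (Sym2 V)) (hL : L ⊆ E) (hE : E.Nonempty) :
    (∀ f : Config E → ℝ,
        innerP p q E f ((Pmhb p q E L).mulVec f) ≤ innerP p q E f ((Pfk p q E).mulVec f)) ∧
      gapP p q E (Pfk p q E) ≤ gapP p q E (Pmhb p q E L) := by
  refine ⟨fun f => part1 E hp hq L hL f, ?_⟩
  unfold gapP
  have hbdd : BddBelow {r : ℝ | ∃ f : Config E → ℝ, varP p q E f ≠ 0 ∧
      r = innerP p q E f (fun ω => f ω - (Pfk p q E).mulVec f ω) / varP p q E f} := by
    refine ⟨0, fun r hr => ?_⟩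
    obtain ⟨f, hvf, rfl⟩ := hr
    apply div_nonneg ?_ (varP_pos_of_ne E hp hq f hvf).le
    rw [innerP_sub_right E f f ((Pfk p q E).mulVec f)]
    exact sub_nonneg.mpr (pfk_le_self E hp hq hE f)
  obtain ⟨f₀, hvf₀⟩ := exists_var_ne E hp hq hE
  apply le_csInf
  · exact ⟨innerP p q E f₀ (fun ω => f₀ ω - (Pmhb p q E L).mulVec f₀ ω) / varP p q E f₀,
      ⟨f₀, hvf₀, rfl⟩⟩
  rintro b ⟨f, hvf, rfl⟩
  refine (csInf_le hbdd ⟨f, hvf, rfl⟩).trans ?_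
  rw [div_le_div_iff_of_pos_right (varP_pos_of_ne E hp hq f hvf)]
  rw [innerP_sub_right E f f ((Pfk p q E).mulVec f),
    innerP_sub_right E f f ((Pmhb p q E L).mulVec f)]
  exact sub_le_sub_left (part1 E hp hq L hL f) _
end
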